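/- arXiv:2312.10026 — 5 statements merged into one kernel-verified Lean document; each statement's English description precedes it below -/
import Mathlib

section
/- Let r_d denote the radius of the Euclidean ball of volume 1 in ℝ^d, with d ≥ 4. If x, y ∈ ℝ^d satisfy ‖x - y‖ ≥ t for t ≥ 0, then Vol(B_x(2r_d) ∩ B_y(2r_d)) ≤ 2^d · exp(-t²/4). -/
set_option maxHeartbeats 1000000

open Real MeasureTheory

lemma aux_two_mul_pow_le (n : ℕ) (hn : 1 ≤ n) : 2 * (n : ℝ) ^ n ≤ ((n : ℝ) + 1) ^ n := by
  have hn0 : (0 : ℝ) < n := by exact_mod_cast hn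
  have h : (2 : ℝ) ≤ (1 + 1 / n) ^ n := by
    have hnn : (0:ℝ) ≤ 1 / (n:ℝ) := by positivity
    have := one_add_mul_le_pow (a := 1 / (n : ℝ)) (by linarith) n
    rw [mul_one_div, div_self hn0.ne'] at this
    linarith
  calc 2 * (n : ℝ) ^ n ≤ (1 + 1 / n) ^ n * (n : ℝ) ^ n := by
        have := pow_nonneg hn0.le n
        nlinarith
    _ = ((1 + 1 / n) * n) ^ n := by rw [mul_pow]
    _ = ((n : ℝ) + 1) ^ n := by congr 1; field_simp
  
lemma aux_three_mul_pow_le (n : ℕ) (hn : 1 ≤ n) : 3 * (n : ℝ) ^ n ≤ ((n : ℝ) + 2) ^ n := by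
  have hn0 : (0 : ℝ) < n := by exact_mod_cast hn
  have h : (3 : ℝ) ≤ (1 + 2 / n) ^ n := by
    have hnn : (0:ℝ) ≤ 2 / (n:ℝ) := by positivity
    have := one_add_mul_le_pow (a := 2 / (n : ℝ)) (by linarith) n
    have hx : (n:ℝ) * (2 / n) = 2 := by field_simp
    rw [hx] at this
    linarith
  calc 3 * (n : ℝ) ^ n ≤ (1 + 2 / n) ^ n * (n : ℝ) ^ n := by
        have := pow_nonneg hn0.le n
        nlinarith
    _ = ((1 + 2 / n) * n) ^ n := by rw [mul_pow]
    _ = ((n : ℝ) + 2) ^ n := by congr 1; field_simp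

lemma aux_factA : ∀ k : ℕ, 2 ≤ k → (k.factorial : ℝ) ≤ (π * k / 4) ^ k := by
  intro k hk
  induction k, hk using Nat.le_induction with
  | base =>
    norm_num [Nat.factorial]
    nlinarith [pi_gt_three]
  | succ k hk ih =>
    have hk0 : (0 : ℝ) < k := by exact_mod_cast (by omega : 0 < k)
    have h2 : 2 * ((k : ℝ)) ^ k ≤ ((k : ℝ) + 1) ^ k := aux_two_mul_pow_le k (by omega)
    have hpos : (0 : ℝ) ≤ (π / 4) ^ k := by positivity
    have h3 : 2 * (π * k / 4) ^ k ≤ (π * (k + 1) / 4) ^ k := by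
      have e1 : (π * (k : ℝ) / 4) ^ k = (π / 4) ^ k * (k : ℝ) ^ k := by
        rw [← mul_pow]; ring_nf
      have e2 : (π * ((k : ℝ) + 1) / 4) ^ k = (π / 4) ^ k * ((k : ℝ) + 1) ^ k := by
        rw [← mul_pow]; ring_nf
      rw [e1, e2]
      nlinarith
    have hLpos : (0 : ℝ) ≤ (π * k / 4) ^ k := by positivity
    have hcast : ((k + 1).factorial : ℝ) = ((k : ℝ) + 1) * k.factorial := by
      rw [Nat.factorial_succ]; push_cast; ring
    rw [hcast, pow_succ]
    push_cast
    have hfpos : (0 : ℝ) ≤ k.factorial := by positivity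
    have hstep1 : ((k:ℝ) + 1) ≤ 2 * (π * ((k:ℝ) + 1) / 4) := by nlinarith [pi_gt_three]
    have hstep2 : ((k:ℝ) + 1) * (π * (k:ℝ) / 4) ^ k ≤ 2 * (π * ((k:ℝ) + 1) / 4) * (π * (k:ℝ) / 4) ^ k :=
      mul_le_mul_of_nonneg_right hstep1 hLpos
    have hstep3 : 2 * (π * (k:ℝ) / 4) ^ k * (π * ((k:ℝ) + 1) / 4)
        ≤ (π * ((k:ℝ) + 1) / 4) ^ k * (π * ((k:ℝ) + 1) / 4) :=
      mul_le_mul_of_nonneg_right h3 (by positivity)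
    calc ((k : ℝ) + 1) * k.factorial ≤ ((k : ℝ) + 1) * (π * k / 4) ^ k := by nlinarith
      _ ≤ (π * ((k:ℝ) + 1) / 4) ^ k * (π * ((k:ℝ) + 1) / 4) := by nlinarith [hstep2, hstep3]

lemma aux_factB : ∀ k : ℕ, 2 ≤ k →
    (k.factorial * (k + 1).factorial : ℝ) ≤ (π * (2 * k + 1) / 8) ^ (2 * k + 1) := by
  intro k hk
  induction k, hk using Nat.le_induction with
  | base =>
    have h : (1.96 : ℝ) ≤ π * (2 * 2 + 1) / 8 := by nlinarith [pi_gt_d6]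
    have h2 : ((1.96 : ℝ)) ^ (2 * 2 + 1) ≤ (π * (2 * 2 + 1) / 8) ^ (2 * 2 + 1) :=
      pow_le_pow_left₀ (by norm_num) h _
    norm_num [Nat.factorial] at h2 ⊢
    nlinarith
  | succ k hk ih =>
    have hk0 : (0 : ℝ) < k := by exact_mod_cast (by omega : 0 < k)
    have h3 : 3 * ((2 * k + 1 : ℕ) : ℝ) ^ (2 * k + 1) ≤ (((2 * k + 1 : ℕ) : ℝ) + 2) ^ (2 * k + 1) :=
      aux_three_mul_pow_le (2 * k + 1) (by omega)
    push_cast at h3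
    have hbig : 3 * (π * (2 * (k : ℝ) + 1) / 8) ^ (2 * k + 1)
        ≤ (π * (2 * (k : ℝ) + 3) / 8) ^ (2 * k + 1) := by
      have e1 : (π * (2 * (k : ℝ) + 1) / 8) ^ (2 * k + 1)
          = (π / 8) ^ (2 * k + 1) * (2 * (k : ℝ) + 1) ^ (2 * k + 1) := by
        rw [← mul_pow]; ring_nf
      have e2 : (π * (2 * (k : ℝ) + 3) / 8) ^ (2 * k + 1)
          = (π / 8) ^ (2 * k + 1) * (2 * (k : ℝ) + 3) ^ (2 * k + 1) := by
        rw [← mul_pow]; ring_nf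
      have hp : (0 : ℝ) ≤ (π / 8) ^ (2 * k + 1) := by positivity
      rw [e1, e2]
      have hre : (2 * (k : ℝ) + 1 + 2) = 2 * (k : ℝ) + 3 := by ring
      rw [hre] at h3
      nlinarith
    have hfc : ((k + 1).factorial * (k + 1 + 1).factorial : ℝ)
        = ((k : ℝ) + 1) * ((k : ℝ) + 2) * (k.factorial * (k + 1).factorial) := by
      rw [Nat.factorial_succ (k + 1), Nat.factorial_succ k]
      push_cast; ring
    have hexp : (π * (2 * ((k : ℝ) + 1) + 1) / 8) ^ (2 * (k + 1) + 1)
        = (π * (2 * (k : ℝ) + 3) / 8) ^ 2 * (π * (2 * (k : ℝ) + 3) / 8) ^ (2 * k + 1) := by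
      rw [← pow_add]
      ring_nf
    have hL : (0 : ℝ) ≤ (k.factorial * (k + 1).factorial : ℝ) := by positivity
    have hR : (0 : ℝ) ≤ (π * (2 * (k : ℝ) + 1) / 8) ^ (2 * k + 1) := by positivity
    have hkey : ((k : ℝ) + 1) * ((k : ℝ) + 2) ≤ 3 * (π * (2 * (k : ℝ) + 3) / 8) ^ 2 := by
      have hpi2 : (9:ℝ) ≤ π ^ 2 := by nlinarith [pi_gt_three]
      nlinarith [mul_le_mul_of_nonneg_right hpi2 (sq_nonneg (2 * (k:ℝ) + 3)), hk0,
        sq_nonneg ((k:ℝ))]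
    have hmid : ((k : ℝ) + 1) * ((k : ℝ) + 2) * (k.factorial * (k + 1).factorial : ℝ)
        ≤ 3 * (π * (2 * (k : ℝ) + 3) / 8) ^ 2 * (π * (2 * (k : ℝ) + 1) / 8) ^ (2 * k + 1) :=
      mul_le_mul hkey ih hL (by positivity)
    rw [hfc]
    push_cast
    rw [hexp]
    have hsq : (0 : ℝ) ≤ (π * (2 * (k : ℝ) + 3) / 8) ^ 2 := by positivity
    nlinarith [mul_le_mul_of_nonneg_left hbig hsq]

lemma aux_gamma_sq (a b : ℝ) (ha : 0 < a) (hb : 0 < b) :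
    Real.Gamma ((a + b) / 2) ^ 2 ≤ Real.Gamma a * Real.Gamma b := by
  have h := Real.convexOn_log_Gamma.2 (Set.mem_Ioi.mpr ha) (Set.mem_Ioi.mpr hb)
    (by norm_num : (0:ℝ) ≤ 1/2) (by norm_num : (0:ℝ) ≤ 1/2) (by norm_num)
  simp only [smul_eq_mul, Function.comp_apply] at h
  have hm : (1 / 2 : ℝ) * a + 1 / 2 * b = (a + b) / 2 := by ring
  rw [hm] at h
  have hga : 0 < Real.Gamma a := Real.Gamma_pos_of_pos ha
  have hgb : 0 < Real.Gamma b := Real.Gamma_pos_of_pos hb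
  have hgm : 0 < Real.Gamma ((a + b) / 2) := Real.Gamma_pos_of_pos (by linarith)
  have h2 := Real.exp_le_exp.mpr (by linarith : 2 * Real.log (Real.Gamma ((a+b)/2))
      ≤ Real.log (Real.Gamma a) + Real.log (Real.Gamma b))
  rw [Real.exp_add, Real.exp_log hga, Real.exp_log hgb] at h2
  calc Real.Gamma ((a + b) / 2) ^ 2
      = Real.exp (2 * Real.log (Real.Gamma ((a + b) / 2))) := by
        rw [two_mul, Real.exp_add, Real.exp_log hgm, sq]
    _ ≤ Real.Gamma a * Real.Gamma b := h2

lemma aux_gamma_bound (d : ℕ) (hd : 4 ≤ d) :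
    Real.Gamma ((d : ℝ) / 2 + 1) ^ 2 ≤ (π * d / 8) ^ d := by
  obtain ⟨k, rfl | rfl⟩ := Nat.even_or_odd' d
  · -- d = 2k
    have hk : 2 ≤ k := by omega
    have harg : ((2 * k : ℕ) : ℝ) / 2 + 1 = (k : ℝ) + 1 := by push_cast; ring
    rw [harg, Real.Gamma_nat_eq_factorial]
    have hA := aux_factA k hk
    have hbase : π * ((2 * k : ℕ) : ℝ) / 8 = π * k / 4 := by push_cast; ring
    rw [hbase]
    have he : ((π * (k:ℝ) / 4) ^ k) ^ 2 = (π * (k : ℝ) / 4) ^ (2 * k) := by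
      rw [← pow_mul, Nat.mul_comm]
    rw [← he]
    have hf : (0 : ℝ) ≤ k.factorial := by positivity
    nlinarith
  · -- d = 2k+1
    have hk : 2 ≤ k := by omega
    have harg : ((2 * k + 1 : ℕ) : ℝ) / 2 + 1 = (((k : ℝ) + 1) + ((k : ℝ) + 2)) / 2 := by
      push_cast; ring
    rw [harg]
    have h1 := aux_gamma_sq ((k : ℝ) + 1) ((k : ℝ) + 2) (by positivity) (by positivity)
    have e1 : Real.Gamma ((k : ℝ) + 1) = k.factorial := Real.Gamma_nat_eq_factorial k
    have e2 : Real.Gamma ((k : ℝ) + 2) = (k + 1).factorial := by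
      have hc : ((k : ℝ) + 2) = ((k + 1 : ℕ) : ℝ) + 1 := by push_cast; ring
      rw [hc, Real.Gamma_nat_eq_factorial]
    rw [e1, e2] at h1
    calc Real.Gamma ((((k : ℝ) + 1) + ((k : ℝ) + 2)) / 2) ^ 2
        ≤ (k.factorial * (k + 1).factorial : ℝ) := h1
      _ ≤ (π * ((2 * k + 1 : ℕ) : ℝ) / 8) ^ (2 * k + 1) := by
          have hB := aux_factB k hk; push_cast at hB ⊢; linarith

theorem volume_ball_intersection (d : ℕ) (hd : 4 ≤ d) (r : ℝ) (hr : 0 < r)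
    (hvol : MeasureTheory.volume (Metric.closedBall (0 : EuclideanSpace ℝ (Fin d)) r) = 1)
    (x y : EuclideanSpace ℝ (Fin d)) (t : ℝ) (ht : 0 ≤ t) (hxy : t ≤ ‖x - y‖) :
    MeasureTheory.volume (Metric.closedBall x (2*r) ∩ Metric.closedBall y (2*r))
      ≤ ENNReal.ofReal (2^d * Real.exp (-t^2/4)) := by
  haveI : Nonempty (Fin d) := ⟨⟨0, by omega⟩⟩
  have hd0 : (0 : ℝ) < d := by exact_mod_cast (by omega : 0 < d)
  have hG : 0 < Real.Gamma ((d : ℝ) / 2 + 1) := Real.Gamma_pos_of_pos (by positivity)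
  have hvf : ∀ (c : EuclideanSpace ℝ (Fin d)) (ρ : ℝ), 0 ≤ ρ →
      volume (Metric.closedBall c ρ)
        = ENNReal.ofReal (ρ ^ d * (√π ^ d / Real.Gamma ((d : ℝ) / 2 + 1))) := by
    intro c ρ hρ
    rw [EuclideanSpace.volume_closedBall]
    rw [ENNReal.ofReal_mul (by positivity), ENNReal.ofReal_pow hρ]
    simp [Fintype.card_fin]
  have hone : r ^ d * (√π ^ d / Real.Gamma ((d : ℝ) / 2 + 1)) = 1 := by
    rw [hvf 0 r hr.le] at hvol
    exact ENNReal.ofReal_eq_one.mp hvol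
  have hGeq : r ^ d * √π ^ d = Real.Gamma ((d : ℝ) / 2 + 1) := by
    have h := hone
    rw [mul_div_assoc'] at h
    exact (div_eq_one_iff_eq hG.ne').mp h
  -- r^2 ≤ d/8
  have hr2 : r ^ 2 ≤ (d : ℝ) / 8 := by
    have hGB := aux_gamma_bound d hd
    have hsq : (r ^ 2 * π) ^ d = Real.Gamma ((d : ℝ) / 2 + 1) ^ 2 := by
      have hπ : π ^ d = (√π ^ d) ^ 2 := by
        rw [← pow_mul, Nat.mul_comm, pow_mul, Real.sq_sqrt pi_pos.le]
      have hrr : (r ^ 2) ^ d = (r ^ d) ^ 2 := by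
        rw [← pow_mul, Nat.mul_comm, pow_mul]
      rw [← hGeq, mul_pow, hπ, hrr, ← mul_pow]
    have hle : (r ^ 2 * π) ^ d ≤ (π * (d : ℝ) / 8) ^ d := by rw [hsq]; exact hGB
    have hb := le_of_pow_le_pow_left₀ (by omega : d ≠ 0) (by positivity) hle
    nlinarith [hb, pi_gt_three]
  -- geometry
  set s : ℝ := 4 * r ^ 2 - t ^ 2 / 4 with hsdef
  set m : EuclideanSpace ℝ (Fin d) := (2 : ℝ)⁻¹ • (x + y) with hmdef
  have hsub : ∀ z ∈ Metric.closedBall x (2*r) ∩ Metric.closedBall y (2*r),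
      ‖z - m‖ ^ 2 ≤ s := by
    rintro z ⟨hzx, hzy⟩
    rw [Metric.mem_closedBall, dist_eq_norm] at hzx hzy
    have hpar := parallelogram_law_with_norm ℝ (z - x) (z - y)
    have h1 : (z - x) + (z - y) = (2 : ℝ) • (z - m) := by
      rw [hmdef]
      module
    have h2 : (z - x) - (z - y) = y - x := by abel
    rw [h1, h2] at hpar
    have h3 : ‖(2:ℝ) • (z - m)‖ = 2 * ‖z - m‖ := by
      rw [norm_smul]; simp
    rw [h3, norm_sub_rev y x] at hpar
    have ht2 : t * t ≤ ‖x - y‖ * ‖x - y‖ := mul_le_mul hxy hxy ht (norm_nonneg _)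
    have hx2 : ‖z - x‖ * ‖z - x‖ ≤ (2*r) * (2*r) :=
      mul_le_mul hzx hzx (norm_nonneg _) (by linarith)
    have hy2 : ‖z - y‖ * ‖z - y‖ ≤ (2*r) * (2*r) :=
      mul_le_mul hzy hzy (norm_nonneg _) (by linarith)
    rw [hsdef]
    nlinarith [hpar, ht2, hx2, hy2]
  by_cases hs : s < 0
  · have hempty : Metric.closedBall x (2*r) ∩ Metric.closedBall y (2*r) = ∅ := by
      ext z
      simp only [Set.mem_empty_iff_false, iff_false]
      intro hz
      nlinarith [hsub z hz, sq_nonneg ‖z - m‖]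
    rw [hempty]
    simp
  · push_neg at hs
    have hsubset : Metric.closedBall x (2*r) ∩ Metric.closedBall y (2*r)
        ⊆ Metric.closedBall m (√s) := by
      intro z hz
      rw [Metric.mem_closedBall, dist_eq_norm]
      have h := hsub z hz
      nlinarith [Real.sq_sqrt hs, Real.sqrt_nonneg s, norm_nonneg (z - m),
        sq_nonneg (‖z - m‖ - √s)]
    refine (measure_mono hsubset).trans ?_
    rw [hvf m (√s) (Real.sqrt_nonneg s)]
    apply ENNReal.ofReal_le_ofReal
    have hrd : (0:ℝ) < r ^ d := by positivity
    have hC : √π ^ d / Real.Gamma ((d : ℝ) / 2 + 1) = 1 / r ^ d := by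
      rw [eq_div_iff hrd.ne']
      linear_combination hone
    rw [hC, mul_one_div, div_le_iff₀ hrd]
    -- √s ^ d ≤ 2^d exp(-t²/4) * r^d
    have hrhs : (0:ℝ) ≤ 2 ^ d * Real.exp (-t^2/4) * r ^ d := by positivity
    have hstep : s ≤ 4 * r ^ 2 * Real.exp (-t ^ 2 / (2 * d)) := by
      have hexp1 : 1 - t ^ 2 / (2 * d) ≤ Real.exp (-t ^ 2 / (2 * d)) := by
        have h := Real.add_one_le_exp (-t ^ 2 / (2 * d))
        have he : -t ^ 2 / (2 * (d:ℝ)) = -(t ^ 2 / (2 * d)) := by ring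
        rw [he] at h ⊢
        linarith
      have hA : 2 * r ^ 2 * t ^ 2 / d ≤ t ^ 2 / 4 := by
        rw [div_le_div_iff₀ hd0 (by norm_num)]
        nlinarith [hr2, sq_nonneg t]
      have hs2 : s ≤ 4 * r ^ 2 * (1 - t ^ 2 / (2 * d)) := by
        have he : 4 * r ^ 2 * (1 - t ^ 2 / (2 * (d:ℝ))) = 4 * r ^ 2 - 2 * r ^ 2 * t ^ 2 / d := by
          field_simp
          ring
        rw [he, hsdef]
        linarith
      have := mul_le_mul_of_nonneg_left hexp1 (by positivity : (0:ℝ) ≤ 4 * r ^ 2)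
      linarith
    have f1 : (((2:ℝ) ^ d) : ℝ) ^ 2 = 4 ^ d := by
      rw [← pow_mul, Nat.mul_comm, pow_mul]; norm_num
    have f2 : (r ^ d) ^ 2 = (r ^ 2) ^ d := by
      rw [← pow_mul, Nat.mul_comm, pow_mul]
    have f3 : Real.exp (-t ^ 2 / 4) ^ 2 = Real.exp (-t ^ 2 / (2 * (d:ℝ))) ^ d := by
      rw [← Real.exp_nat_mul, ← Real.exp_nat_mul]
      congr 1
      field_simp
      ring
    have e2 : (2 ^ d * Real.exp (-t ^ 2 / 4) * r ^ d) ^ 2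
        = (4 * r ^ 2 * Real.exp (-t ^ 2 / (2 * (d:ℝ)))) ^ d := by
      rw [mul_pow, mul_pow, f1, f2, f3, mul_pow, mul_pow]
      ring
    have hsqA : (√s ^ d) ^ 2 = s ^ d := by
      rw [← pow_mul, Nat.mul_comm, pow_mul, Real.sq_sqrt hs]
    have hAB : (√s ^ d) ^ 2 ≤ (2 ^ d * Real.exp (-t ^ 2 / 4) * r ^ d) ^ 2 := by
      rw [hsqA, e2]
      exact pow_le_pow_left₀ hs hstep d
    exact le_of_pow_le_pow_left₀ two_ne_zero hrhs hAB
end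

section
/- Let G be a graph where every vertex has degree Δ-1 or Δ, with maximum codegree at most ηΔ, where Δ ≥ 1, γ ≤ 1/2, and Δ^{-1/2} ≤ η ≤ γ²/8. Let A be a random subset of V(G) including each vertex independently with probability p = γ/Δ, and let G' = G \ (A ∪ N(A)). Then for every vertex v: E(d_{G'}(v) | v ∈ G') ≤ (1 - γ + γ²)·d_G(v). -/
open MeasureTheory ProbabilityTheory Finset

lemma cylinder_prob {V : Type} [Fintype V] (p : NNReal) (hp : p ≤ 1) (S : Finset V) :
    (Measure.pi fun _ : V => (PMF.bernoulli p hp).toMeasure) {ω | ∀ w ∈ S, ω w = false}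
      = (1 - (p : ENNReal)) ^ S.card := by
  classical
  have hset : {ω : V → Bool | ∀ w ∈ S, ω w = false}
      = Set.pi Set.univ (fun i => if i ∈ S then {false} else Set.univ) := by
    ext ω
    simp only [Set.mem_setOf_eq, Set.mem_pi, Set.mem_univ, forall_true_left]
    constructor
    · intro h i
      by_cases hi : i ∈ S <;> simp [hi, h i]
    · intro h w hw
      have := h w
      simpa [hw] using this
  rw [hset, Measure.pi_pi]
  have hsing : ((PMF.bernoulli p hp).toMeasure {false}) = 1 - (p : ENNReal) := by
    rw [PMF.toMeasure_apply_singleton _ _ (measurableSet_singleton _)]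
    simp [PMF.bernoulli, ENNReal.coe_sub]
  have : ∀ i : V, (PMF.bernoulli p hp).toMeasure (if i ∈ S then {false} else Set.univ)
      = if i ∈ S then (1 - (p : ENNReal)) else 1 := by
    intro i
    by_cases hi : i ∈ S <;> simp [hi, hsing, PMF.bernoulli, ENNReal.coe_sub, add_tsub_cancel_of_le (ENNReal.coe_le_one_iff.mpr hp)]
  rw [Finset.prod_congr rfl fun i _ => this i, Finset.prod_ite_mem, Finset.univ_inter,
    Finset.prod_const]

set_option maxHeartbeats 1600000 in
theorem expected_degree_after_nibble {V : Type} [Fintype V] (G : SimpleGraph V)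
    [DecidableRel G.Adj] (Δ : ℕ) (γ η : ℝ) (hΔ : 1 ≤ Δ) (hγ0 : 0 < γ) (hγ : γ ≤ 1/2)
    (hη1 : (Δ : ℝ) ^ (-(1:ℝ)/2) ≤ η) (hη2 : η ≤ γ^2/8)
    (hdeg : ∀ v : V, G.degree v = Δ - 1 ∨ G.degree v = Δ)
    (hcodeg : ∀ u v : V, u ≠ v → (Nat.card {w : V | G.Adj u w ∧ G.Adj v w} : ℝ) ≤ η * Δ)
    (hp : ENNReal.ofReal (γ / Δ) ≤ 1)
    (P : Measure (V → Bool))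
    (hP : P = Measure.pi fun _ : V => (PMF.bernoulli (Real.toNNReal (γ / Δ)) (ENNReal.coe_le_one_iff.mp hp)).toMeasure)
    (inG' : V → (V → Bool) → Prop)
    (hinG' : ∀ u ω, inG' u ω ↔ (ω u = false ∧ ∀ w, G.Adj u w → ω w = false))
    (v : V) :
    ∫ ω, (Nat.card {u : V | G.Adj v u ∧ inG' u ω} : ℝ) ∂(P[|{ω | inG' v ω}])
      ≤ (1 - γ + γ^2) * G.degree v := by
  classical
  -- basic real facts
  have hΔR : (1:ℝ) ≤ (Δ:ℝ) := by exact_mod_cast hΔ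
  have hΔ0 : (0:ℝ) < (Δ:ℝ) := by linarith
  set pR : ℝ := γ / Δ with hpR
  have hp0 : 0 < pR := div_pos hγ0 hΔ0
  have hp1 : pR ≤ 1/2 := le_trans (div_le_self hγ0.le hΔR) hγ
  set q : ℝ := 1 - pR with hqdef
  have hq0 : 0 < q := by simp only [hqdef]; linarith
  have hq1 : q ≤ 1 := by simp only [hqdef]; linarith
  have hη0 : 0 < η := lt_of_lt_of_le (Real.rpow_pos_of_pos hΔ0 _) hη1
  -- Δ ≥ 64 / γ^4
  have hΔbig : 64 / γ^4 ≤ (Δ:ℝ) := by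
    have hs0 : (0:ℝ) < Real.sqrt Δ := Real.sqrt_pos.mpr hΔ0
    have hrw : (Δ:ℝ) ^ (-(1:ℝ)/2) = (Real.sqrt Δ)⁻¹ := by
      rw [show (-(1:ℝ)/2) = -(1/2) by ring, Real.rpow_neg hΔ0.le, ← Real.sqrt_eq_rpow]
    have hle : (Real.sqrt Δ)⁻¹ ≤ γ^2/8 := hrw ▸ le_trans hη1 hη2
    have h1 : 1 ≤ γ^2/8 * Real.sqrt Δ := by
      rw [inv_eq_one_div, div_le_iff₀ hs0] at hle
      linarith
    have h8 : 8 / γ^2 ≤ Real.sqrt Δ := by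
      rw [div_le_iff₀ (pow_pos hγ0 2)]
      nlinarith [pow_pos hγ0 2]
    calc (64:ℝ)/γ^4 = (8/γ^2)^2 := by ring
      _ ≤ (Real.sqrt Δ)^2 := pow_le_pow_left₀ (by positivity) h8 2
      _ = Δ := Real.sq_sqrt hΔ0.le
  -- key numeric bound
  have hkey : ∀ k : ℕ, (1-η)*(Δ:ℝ) - 2 ≤ (k:ℝ) → q ^ k ≤ 1 - γ + γ^2 := by
    intro k hk
    set x : ℝ := γ - γ^3/8 - γ^5/32 with hxdef
    have hγ4 : 0 < γ^4 := by positivity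
    have hx2 : 2*γ/Δ ≤ γ^5/32 := by
      rw [div_le_iff₀ hΔ0]
      calc 2*γ = γ^5/32 * (64/γ^4) := by field_simp; ring
        _ ≤ γ^5/32 * Δ := by
            apply mul_le_mul_of_nonneg_left hΔbig (by positivity)
    have e1 : ((1-η)*(Δ:ℝ) - 2) * pR = (1-η)*γ - 2*γ/Δ := by
      rw [hpR]; field_simp
    have hηγ : η*γ ≤ γ^3/8 := by nlinarith
    have e2 : x ≤ ((1-η)*(Δ:ℝ)-2)*pR := by rw [e1, hxdef]; nlinarith
    have e3 : x ≤ (k:ℝ)*pR := le_trans e2 (mul_le_mul_of_nonneg_right hk hp0.le)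
    have hx0 : 0 < x := by rw [hxdef]; nlinarith
    have hkp0 : (0:ℝ) ≤ (k:ℝ)*pR := by positivity
    have h1mp : q ≤ (1+pR)⁻¹ := by
      rw [inv_eq_one_div, le_div_iff₀ (by linarith : (0:ℝ) < 1+pR), hqdef]
      nlinarith
    have h2 : q^k ≤ ((1+pR)^k)⁻¹ := by
      rw [← inv_pow]; exact pow_le_pow_left₀ hq0.le h1mp k
    have h3 : 1 + (k:ℝ)*pR ≤ (1+pR)^k := by
      have := one_add_mul_le_pow (a := pR) (by linarith) k
      linarith [this]
    have h4 : ((1+pR)^k)⁻¹ ≤ (1+x)⁻¹ := by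
      rw [inv_eq_one_div, inv_eq_one_div]
      exact one_div_le_one_div_of_le (by linarith) (by linarith)
    have h6 : (1+x)⁻¹ ≤ 1 - γ + γ^2 := by
      rw [inv_eq_one_div, div_le_iff₀ (by linarith), hxdef]
      have hg2 : γ^2 ≤ 1/4 := by nlinarith
      have h5le : γ^5 ≤ γ^3/4 := by nlinarith [pow_pos hγ0 3]
      have h7le : γ^7 ≤ γ^3/16 := by nlinarith [pow_pos hγ0 3, pow_pos hγ0 5]
      nlinarith [pow_pos hγ0 3, pow_pos hγ0 4, pow_pos hγ0 6, h5le, h7le]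
    linarith
  -- events as cylinders
  set C : V → Finset V := fun u => insert u (G.neighborFinset u) with hC
  have hE : ∀ u, {ω : V → Bool | inG' u ω} = {ω | ∀ w ∈ C u, ω w = false} := by
    intro u; ext ω
    simp only [Set.mem_setOf_eq, hinG', hC, Finset.mem_insert,
      SimpleGraph.mem_neighborFinset]
    constructor
    · rintro ⟨h0, h1⟩ w hw
      rcases hw with rfl | hw
      · exact h0
      · exact h1 w hw
    · intro h; exact ⟨h u (Or.inl rfl), fun w hw => h w (Or.inr hw)⟩
  have hqE : (1:ENNReal) - ENNReal.ofReal (γ/(Δ:ℝ)) = ENNReal.ofReal q := by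
    rw [hqdef, hpR, ENNReal.ofReal_sub _ (le_of_lt hp0), ENNReal.ofReal_one]
  have hPE : ∀ S : Finset V, P {ω | ∀ w ∈ S, ω w = false} = (ENNReal.ofReal q)^S.card := by
    intro S; rw [hP, cylinder_prob]; exact congrArg (· ^ S.card) hqE
  have hq_ne0 : ENNReal.ofReal q ≠ 0 := by
    simp only [ne_eq, ENNReal.ofReal_eq_zero, not_le]; exact hq0
  haveI : IsProbabilityMeasure P := by rw [hP]; infer_instance
  set Ev : Set (V → Bool) := {ω | inG' v ω} with hEvdef
  have hmeasEv : MeasurableSet Ev := (Set.toFinite _).measurableSet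
  have hPEv : P Ev = (ENNReal.ofReal q)^(C v).card := by rw [hEvdef, hE v]; exact hPE _
  have hPEv0 : P Ev ≠ 0 := by rw [hPEv]; exact pow_ne_zero _ hq_ne0
  haveI : IsProbabilityMeasure (P[|Ev]) := cond_isProbabilityMeasure hPEv0
  -- rewrite integrand
  have hcount : ∀ ω : V → Bool, ((Nat.card {u : V | G.Adj v u ∧ inG' u ω}) : ℝ)
      = ∑ u ∈ G.neighborFinset v, Set.indicator {ω' | inG' u ω'} (fun _ => (1:ℝ)) ω := by
    intro ω
    have h1 : {u : V | G.Adj v u ∧ inG' u ω}.toFinset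
        = (G.neighborFinset v).filter (fun u => inG' u ω) := by
      ext u; simp [SimpleGraph.mem_neighborFinset]
    rw [Nat.card_coe_set_eq, Set.ncard_eq_toFinset_card', h1]
    rw [← Finset.sum_boole]
    refine Finset.sum_congr rfl fun u _ => ?_
    rw [Set.indicator_apply]
    simp [Set.mem_setOf_eq]
  have hInt : ∫ ω, ((Nat.card {u : V | G.Adj v u ∧ inG' u ω}) : ℝ) ∂(P[|Ev])
      = ∑ u ∈ G.neighborFinset v, ((P[|Ev]) {ω' | inG' u ω'}).toReal := by
    rw [integral_congr_ae (Filter.Eventually.of_forall hcount)]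
    rw [integral_finset_sum _ (fun u _ =>
      (integrable_const (1:ℝ)).indicator (Set.toFinite _).measurableSet)]
    refine Finset.sum_congr rfl fun u _ => ?_
    rw [integral_indicator_const _ (Set.toFinite _).measurableSet]
    simp
    rfl
  rw [hInt]
  -- per-term bound
  have hterm : ∀ u ∈ G.neighborFinset v, ((P[|Ev]) {ω' | inG' u ω'}).toReal ≤ 1 - γ + γ^2 := by
    intro u hu
    have hadj : G.Adj v u := (SimpleGraph.mem_neighborFinset _ _ _).mp hu
    have hne : u ≠ v := fun h => G.irrefl (h ▸ hadj)
    have hcond : (P[|Ev]) {ω' | inG' u ω'} = (P Ev)⁻¹ * P (Ev ∩ {ω' | inG' u ω'}) :=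
      cond_apply hmeasEv P _
    have hEuv : Ev ∩ {ω' | inG' u ω'} = {ω | ∀ w ∈ C v ∪ C u, ω w = false} := by
      rw [hEvdef, hE u, hE v]
      ext ω
      simp only [Set.mem_inter_iff, Set.mem_setOf_eq, Finset.mem_union]
      constructor
      · rintro ⟨h1, h2⟩ w hw; rcases hw with hw | hw
        · exact h1 w hw
        · exact h2 w hw
      · intro h; exact ⟨fun w hw => h w (Or.inl hw), fun w hw => h w (Or.inr hw)⟩
    have hcard : (C v ∪ C u).card = (C v).card + (C u \ C v).card := by
      rw [Finset.union_comm, ← Finset.card_sdiff_add_card]; omega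
    rw [hcond, hEuv, hPE, hPEv, hcard, pow_add, ← mul_assoc,
      ENNReal.inv_mul_cancel (pow_ne_zero _ hq_ne0)
        (ENNReal.pow_ne_top ENNReal.ofReal_ne_top), one_mul,
      ← ENNReal.ofReal_pow hq0.le, ENNReal.toReal_ofReal (pow_nonneg hq0.le _)]
    apply hkey
    -- cardinality bound
    have huCv : u ∈ C v := Finset.mem_insert_of_mem hu
    have hsd : C u \ C v = G.neighborFinset u \ C v := by
      rw [hC]; exact Finset.insert_sdiff_of_mem _ huCv
    have hsplit := Finset.card_inter_add_card_sdiff (G.neighborFinset u) (C v)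
    have hsub : G.neighborFinset u ∩ C v ⊆ insert v (G.neighborFinset u ∩ G.neighborFinset v) := by
      intro w hw
      simp only [hC, Finset.mem_inter, Finset.mem_insert] at hw ⊢
      tauto
    have hint : ((G.neighborFinset u ∩ G.neighborFinset v).card : ℝ) ≤ η * Δ := by
      have hcd := hcodeg u v hne
      have heq : {w : V | G.Adj u w ∧ G.Adj v w}.toFinset
          = G.neighborFinset u ∩ G.neighborFinset v := by
        ext w; simp [SimpleGraph.mem_neighborFinset]
      rwa [Nat.card_coe_set_eq, Set.ncard_eq_toFinset_card', heq] at hcd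
    have hdu : (Δ:ℝ) - 1 ≤ ((G.neighborFinset u).card : ℝ) := by
      rw [SimpleGraph.card_neighborFinset_eq_degree]
      rcases hdeg u with h | h <;> rw [h]
      · rw [Nat.cast_sub hΔ]; simp
      · push_cast; linarith
    have hcap : ((G.neighborFinset u ∩ C v).card : ℝ) ≤ 1 + η*Δ := by
      have h1 := Finset.card_le_card hsub
      have h2 := Finset.card_insert_le v (G.neighborFinset u ∩ G.neighborFinset v)
      have h3 : ((G.neighborFinset u ∩ C v).card : ℝ)
          ≤ ((G.neighborFinset u ∩ G.neighborFinset v).card : ℝ) + 1 := by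
        exact_mod_cast le_trans h1 h2
      linarith
    have hfin : ((G.neighborFinset u ∩ C v).card : ℝ)
        + ((G.neighborFinset u \ C v).card : ℝ) = ((G.neighborFinset u).card : ℝ) := by
      exact_mod_cast hsplit
    rw [hsd]
    nlinarith
  calc ∑ u ∈ G.neighborFinset v, ((P[|Ev]) {ω' | inG' u ω'}).toReal
      ≤ ∑ _u ∈ G.neighborFinset v, (1 - γ + γ^2) := Finset.sum_le_sum hterm
    _ = (G.neighborFinset v).card * (1 - γ + γ^2) := by rw [Finset.sum_const]; ring
    _ = (1 - γ + γ^2) * G.degree v := by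
        rw [SimpleGraph.card_neighborFinset_eq_degree]; ring
end

section
/- Let G be a graph where every vertex has degree Δ-1 or Δ, with maximum codegree at most ηΔ, where Δ ≥ 1, γ ≤ 1/2, and Δ^{-1/2} ≤ η ≤ γ²/8. Let A be a p-random subset of V(G) with p = γ/Δ and let G' = G \ (A ∪ N(A)). Then for all distinct u, v ∈ V(G): E(d_{G'}(u,v) | u,v ∈ G') ≤ (1 - γ + γ²)·d_G(u,v). -/
open MeasureTheory ProbabilityTheory

lemma nibble_bonferroni (p : ℝ) (hp0 : 0 ≤ p) (hp1 : p ≤ 1) (n : ℕ) :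
    (1 - p) ^ n ≤ 1 - n * p + (n * p) ^ 2 / 2 := by
  induction n with
  | zero => norm_num
  | succ n ih =>
    have h1 : (0:ℝ) ≤ 1 - p := by linarith
    have h2 := mul_le_mul_of_nonneg_right ih h1
    rw [pow_succ]
    push_cast
    nlinarith [sq_nonneg ((n:ℝ) * p), mul_nonneg (mul_nonneg (Nat.cast_nonneg n : (0:ℝ) ≤ n) hp0) hp0,
      mul_nonneg (mul_nonneg (mul_nonneg (Nat.cast_nonneg n : (0:ℝ) ≤ n) (Nat.cast_nonneg n : (0:ℝ) ≤ n)) hp0) (mul_nonneg hp0 hp0)]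

lemma nibble_allFalse_meas {V : Type} [Fintype V] (T : Finset V) :
    MeasurableSet {ω : V → Bool | ∀ x ∈ T, ω x = false} := by
  have : {ω : V → Bool | ∀ x ∈ T, ω x = false}
      = ⋂ x ∈ T, (fun ω : V → Bool => ω x) ⁻¹' {false} := by
    ext ω; simp
  rw [this]
  exact MeasurableSet.biInter (Set.to_countable _)
    (fun x _ => (measurable_pi_apply x) (measurableSet_singleton false))

lemma nibble_pi_allFalse {V : Type} [Fintype V] (p : ENNReal) (hp : p ≤ 1) (T : Finset V) :
    (Measure.pi fun _ : V => (PMF.bernoulli p.toNNReal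
      (by simpa using ENNReal.toNNReal_mono ENNReal.one_ne_top hp)).toMeasure)
      {ω : V → Bool | ∀ x ∈ T, ω x = false} = (1 - p) ^ T.card := by
  classical
  have hset : {ω : V → Bool | ∀ x ∈ T, ω x = false}
      = Set.pi Set.univ (fun x => if x ∈ T then ({false} : Set Bool) else Set.univ) := by
    ext ω
    simp only [Set.mem_setOf_eq, Set.mem_pi, Set.mem_univ, forall_true_left]
    constructor
    · intro h x
      split_ifs with hx
      · exact h x hx
      · trivial
    · intro h x hx
      have := h x; rw [if_pos hx] at this; exact this
  rw [hset, Measure.pi_pi]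
  have hp1 : p.toNNReal ≤ 1 := by
    have := ENNReal.toNNReal_mono ENNReal.one_ne_top hp; rwa [ENNReal.toNNReal_one] at this
  have hfalse : (PMF.bernoulli p.toNNReal hp1).toMeasure {false} = 1 - p := by
    rw [PMF.toMeasure_apply_singleton _ _ (measurableSet_singleton _)]
    simp [PMF.bernoulli_apply, ENNReal.coe_toNNReal (ne_top_of_le_ne_top ENNReal.one_ne_top hp)]
  have : ∀ x : V, (PMF.bernoulli p.toNNReal hp1).toMeasure (if x ∈ T then ({false} : Set Bool) else Set.univ)
      = if x ∈ T then (1 - p) else 1 := by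
    intro x; split_ifs
    · exact hfalse
    · exact measure_univ
  simp only [this]
  rw [Finset.prod_ite_mem, Finset.univ_inter, Finset.prod_const]

set_option maxHeartbeats 2000000 in
theorem expected_codegree_after_nibble {V : Type} [Fintype V] (G : SimpleGraph V)
    [DecidableRel G.Adj] (Δ : ℕ) (γ η : ℝ) (hΔ : 1 ≤ Δ) (hγ0 : 0 < γ) (hγ : γ ≤ 1/2)
    (hη1 : (Δ : ℝ) ^ (-(1:ℝ)/2) ≤ η) (hη2 : η ≤ γ^2/8)
    (hdeg : ∀ v : V, G.degree v = Δ - 1 ∨ G.degree v = Δ)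
    (hcodeg : ∀ u v : V, u ≠ v → (Nat.card {w : V | G.Adj u w ∧ G.Adj v w} : ℝ) ≤ η * Δ)
    (hp : ENNReal.ofReal (γ / Δ) ≤ 1)
    (P : Measure (V → Bool))
    (hP : P = Measure.pi fun _ : V => (PMF.bernoulli (ENNReal.ofReal (γ / Δ)).toNNReal
      (by simpa using ENNReal.toNNReal_mono ENNReal.one_ne_top hp)).toMeasure)
    (inG' : V → (V → Bool) → Prop)
    (hinG' : ∀ u ω, inG' u ω ↔ (ω u = false ∧ ∀ w, G.Adj u w → ω w = false))
    (u v : V) (huv : u ≠ v) :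
    ∫ ω, (Nat.card {w : V | G.Adj u w ∧ G.Adj v w ∧ inG' w ω} : ℝ)
        ∂(P[|{ω | inG' u ω ∧ inG' v ω}])
      ≤ (1 - γ + γ^2) * Nat.card {w : V | G.Adj u w ∧ G.Adj v w} := by
  classical
  subst hP
  set p' : ENNReal := ENNReal.ofReal (γ / Δ) with hp'def
  set μ : Measure (V → Bool) :=
    Measure.pi fun _ : V => (PMF.bernoulli p'.toNNReal
      (by simpa using ENNReal.toNNReal_mono ENNReal.one_ne_top hp)).toMeasure with hμdef
  have hΔR : (1:ℝ) ≤ Δ := by exact_mod_cast hΔ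
  have hΔ0 : (0:ℝ) < Δ := by linarith
  have hpr0 : 0 ≤ γ / Δ := div_nonneg hγ0.le hΔ0.le
  have hpr1 : γ / Δ ≤ 1/2 := by
    rw [div_le_iff₀ hΔ0]; nlinarith
  have hr0 : (0:ℝ) ≤ 1 - γ / Δ := by linarith
  have hq : (1 : ENNReal) - p' = ENNReal.ofReal (1 - γ/Δ) := by
    rw [ENNReal.ofReal_sub _ hpr0, ENNReal.ofReal_one]
  have hq1 : (1 : ENNReal) - p' ≤ 1 := tsub_le_self
  have hqne0 : (1 : ENNReal) - p' ≠ 0 := by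
    rw [hq]
    exact (ENNReal.ofReal_pos.mpr (by linarith)).ne'
  -- the finsets
  set A : Finset V := insert u (insert v (G.neighborFinset u ∪ G.neighborFinset v)) with hA
  set S : Finset V := Finset.univ.filter (fun w => G.Adj u w ∧ G.Adj v w) with hS
  set Eset : Set (V → Bool) := {ω | inG' u ω ∧ inG' v ω} with hEsetdef
  have hEset : Eset = {ω : V → Bool | ∀ x ∈ A, ω x = false} := by
    ext ω
    simp only [hEsetdef, Set.mem_setOf_eq, hinG', hA, Finset.mem_insert, Finset.mem_union,
      SimpleGraph.mem_neighborFinset]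
    constructor
    · rintro ⟨⟨h1, h2⟩, h3, h4⟩ x hx
      rcases hx with rfl | rfl | h | h
      · exact h1
      · exact h3
      · exact h2 _ h
      · exact h4 _ h
    · intro h
      exact ⟨⟨h u (Or.inl rfl), fun w hw => h w (Or.inr (Or.inr (Or.inl hw)))⟩,
             h v (Or.inr (Or.inl rfl)), fun w hw => h w (Or.inr (Or.inr (Or.inr hw)))⟩
  have hEmeas : MeasurableSet Eset := by rw [hEset]; exact nibble_allFalse_meas A
  have hEμ : μ Eset = (1 - p') ^ A.card := by rw [hEset]; exact nibble_pi_allFalse p' hp A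
  have hE0 : μ Eset ≠ 0 := by rw [hEμ]; exact pow_ne_zero _ hqne0
  haveI : IsProbabilityMeasure μ := by
    rw [hμdef]; infer_instance
  haveI hcondprob : IsProbabilityMeasure (μ[|Eset]) := cond_isProbabilityMeasure hE0
  -- the per-vertex event
  set B : V → Finset V := fun w => insert w (G.neighborFinset w) with hB
  have hFset : ∀ w, {ω : V → Bool | inG' w ω} = {ω : V → Bool | ∀ x ∈ B w, ω x = false} := by
    intro w
    ext ω
    simp only [Set.mem_setOf_eq, hinG', hB, Finset.mem_insert, SimpleGraph.mem_neighborFinset]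
    constructor
    · rintro ⟨h1, h2⟩ x hx
      rcases hx with rfl | h
      · exact h1
      · exact h2 _ h
    · intro h
      exact ⟨h w (Or.inl rfl), fun x hx => h x (Or.inr hx)⟩
  have hFmeas : ∀ w, MeasurableSet {ω : V → Bool | inG' w ω} := by
    intro w; rw [hFset w]; exact nibble_allFalse_meas (B w)
  -- rewrite the integrand as a sum of indicators
  have hint : ∀ ω : V → Bool, (Nat.card {w : V | G.Adj u w ∧ G.Adj v w ∧ inG' w ω} : ℝ)
      = ∑ w ∈ S, Set.indicator {ω' : V → Bool | inG' w ω'} (fun _ => (1:ℝ)) ω := by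
    intro ω
    have hseteq : {w : V | G.Adj u w ∧ G.Adj v w ∧ inG' w ω}
        = ↑(S.filter (fun w => inG' w ω)) := by
      ext x; simp [hS, and_assoc]
    rw [hseteq, Nat.card_coe_set_eq, Set.ncard_coe_finset, Finset.card_filter]
    push_cast
    refine Finset.sum_congr rfl (fun w _ => ?_)
    rw [Set.indicator_apply]
    simp [Set.mem_setOf_eq]
  simp only [hint]
  rw [integral_finset_sum S
    (fun w _ => (integrable_const (1:ℝ)).indicator (hFmeas w))]
  -- identify RHS cardinality with S.card
  have hScard : (Nat.card {w : V | G.Adj u w ∧ G.Adj v w} : ℝ) = S.card := by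
    have : {w : V | G.Adj u w ∧ G.Adj v w} = ↑S := by ext x; simp [hS]
    rw [this, Nat.card_coe_set_eq, Set.ncard_coe_finset]
  rw [hScard]
  -- it suffices to bound each term
  have hterm : ∀ w ∈ S,
      ∫ ω, Set.indicator {ω' : V → Bool | inG' w ω'} (fun _ => (1:ℝ)) ω ∂(μ[|Eset])
        ≤ 1 - γ + γ^2 := by
    intro w hw
    rw [hS, Finset.mem_filter] at hw
    obtain ⟨-, hw1, hw2⟩ := hw
    rw [integral_indicator_const (1:ℝ) (hFmeas w), smul_eq_mul, mul_one, measureReal_def,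
      cond_apply hEmeas μ _]
    -- compute the measure of the intersection
    have hEF : Eset ∩ {ω : V → Bool | inG' w ω}
        = {ω : V → Bool | ∀ x ∈ A ∪ B w, ω x = false} := by
      rw [hEset, hFset w]
      ext ω
      simp only [Set.mem_inter_iff, Set.mem_setOf_eq, Finset.mem_union]
      constructor
      · rintro ⟨h1, h2⟩ x (hx | hx)
        · exact h1 x hx
        · exact h2 x hx
      · intro h
        exact ⟨fun x hx => h x (Or.inl hx), fun x hx => h x (Or.inr hx)⟩
    set n : ℕ := (B w \ A).card with hn
    have hcardU : (A ∪ B w).card = A.card + n := by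
      rw [← Finset.union_sdiff_self_eq_union,
        Finset.card_union_of_disjoint Finset.disjoint_sdiff]
    have hμEF : μ (Eset ∩ {ω : V → Bool | inG' w ω}) = (1 - p') ^ (A.card + n) := by
      rw [hEF, nibble_pi_allFalse p' hp, hcardU]
    rw [hμEF, hEμ, pow_add, ← mul_assoc,
      ENNReal.inv_mul_cancel (pow_ne_zero _ hqne0)
        (ne_top_of_le_ne_top ENNReal.one_ne_top (pow_le_one' hq1 _)), one_mul]
    have htoReal : ((1 - p') ^ n).toReal = (1 - γ/Δ) ^ n := by
      rw [hq, ← ENNReal.ofReal_pow hr0, ENNReal.toReal_ofReal (pow_nonneg hr0 n)]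
    rw [htoReal]
    -- now the combinatorial bounds on n
    have hwu : w ≠ u := (G.ne_of_adj hw1).symm
    have hwv : w ≠ v := (G.ne_of_adj hw2).symm
    have hBcard_lo : Δ ≤ (B w).card := by
      have hself : w ∉ G.neighborFinset w := by
        simp [SimpleGraph.mem_neighborFinset]
      rw [hB]
      simp only [Finset.card_insert_of_notMem hself]
      have := G.card_neighborFinset_eq_degree w
      rcases hdeg w with h | h <;> omega
    have hBcard_hi : (B w).card ≤ Δ + 1 := by
      rw [hB]
      refine le_trans (Finset.card_insert_le _ _) ?_
      have := G.card_neighborFinset_eq_degree w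
      rcases hdeg w with h | h <;> omega
    have hn_hi : n ≤ Δ + 1 :=
      le_trans (Finset.card_le_card (Finset.sdiff_subset)) hBcard_hi
    -- |B w ∩ A| ≤ 3 + 2ηΔ
    have hcap : ((B w ∩ A).card : ℝ) ≤ 2 * η * Δ + 3 := by
      have hsub : B w ∩ A ⊆ insert u (insert v (insert w
          ((G.neighborFinset w ∩ G.neighborFinset u)
            ∪ (G.neighborFinset w ∩ G.neighborFinset v)))) := by
        intro x hx
        rw [Finset.mem_inter] at hx
        obtain ⟨hxB, hxA⟩ := hx
        rw [hB, Finset.mem_insert, SimpleGraph.mem_neighborFinset] at hxB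
        rw [hA, Finset.mem_insert, Finset.mem_insert, Finset.mem_union,
          SimpleGraph.mem_neighborFinset, SimpleGraph.mem_neighborFinset] at hxA
        simp only [Finset.mem_insert, Finset.mem_union, Finset.mem_inter,
          SimpleGraph.mem_neighborFinset]
        rcases hxA with rfl | rfl | h | h
        · exact Or.inl rfl
        · exact Or.inr (Or.inl rfl)
        · rcases hxB with rfl | hB'
          · exact Or.inr (Or.inr (Or.inl rfl))
          · exact Or.inr (Or.inr (Or.inr (Or.inl ⟨hB', h⟩)))
        · rcases hxB with rfl | hB'
          · exact Or.inr (Or.inr (Or.inl rfl))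
          · exact Or.inr (Or.inr (Or.inr (Or.inr ⟨hB', h⟩)))
      have hc1 : ((G.neighborFinset w ∩ G.neighborFinset u).card : ℝ) ≤ η * Δ := by
        have h := hcodeg w u hwu
        have heq : {x : V | G.Adj w x ∧ G.Adj u x}
            = ↑(G.neighborFinset w ∩ G.neighborFinset u) := by
          ext x; simp [SimpleGraph.mem_neighborFinset]
        rwa [heq, Nat.card_coe_set_eq, Set.ncard_coe_finset] at h
      have hc2 : ((G.neighborFinset w ∩ G.neighborFinset v).card : ℝ) ≤ η * Δ := by
        have h := hcodeg w v hwv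
        have heq : {x : V | G.Adj w x ∧ G.Adj v x}
            = ↑(G.neighborFinset w ∩ G.neighborFinset v) := by
          ext x; simp [SimpleGraph.mem_neighborFinset]
        rwa [heq, Nat.card_coe_set_eq, Set.ncard_coe_finset] at h
      have hcard1 : (B w ∩ A).card ≤
          ((G.neighborFinset w ∩ G.neighborFinset u)
            ∪ (G.neighborFinset w ∩ G.neighborFinset v)).card + 3 := by
        refine le_trans (Finset.card_le_card hsub) ?_
        refine le_trans (Finset.card_insert_le _ _) ?_
        refine le_trans (Nat.add_le_add_right (Finset.card_insert_le _ _) 1) ?_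
        refine le_trans (Nat.add_le_add_right
          (Nat.add_le_add_right (Finset.card_insert_le _ _) 1) 1) ?_
        omega
      have hcard2 : (((G.neighborFinset w ∩ G.neighborFinset u)
            ∪ (G.neighborFinset w ∩ G.neighborFinset v)).card : ℝ)
          ≤ 2 * η * Δ := by
        have := Finset.card_union_le (G.neighborFinset w ∩ G.neighborFinset u)
          (G.neighborFinset w ∩ G.neighborFinset v)
        have hcast : (((G.neighborFinset w ∩ G.neighborFinset u)
            ∪ (G.neighborFinset w ∩ G.neighborFinset v)).card : ℝ)
            ≤ ((G.neighborFinset w ∩ G.neighborFinset u).card : ℝ)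
              + ((G.neighborFinset w ∩ G.neighborFinset v).card : ℝ) := by
          exact_mod_cast this
        linarith
      calc ((B w ∩ A).card : ℝ)
          ≤ (((G.neighborFinset w ∩ G.neighborFinset u)
              ∪ (G.neighborFinset w ∩ G.neighborFinset v)).card : ℝ) + 3 := by
            exact_mod_cast hcard1
        _ ≤ 2 * η * Δ + 3 := by linarith
    have hn_eq : (n : ℝ) = ((B w).card : ℝ) - ((B w ∩ A).card : ℝ) := by
      have : B w \ A = B w \ (B w ∩ A) := (Finset.sdiff_inter_self_left (B w) A).symm
      rw [hn, this, Finset.card_sdiff_of_subset Finset.inter_subset_left]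
      rw [Nat.cast_sub (Finset.card_le_card Finset.inter_subset_left)]
    have hn_lo : (Δ : ℝ) - 2 * η * Δ - 3 ≤ (n : ℝ) := by
      rw [hn_eq]
      have : (Δ : ℝ) ≤ ((B w).card : ℝ) := by exact_mod_cast hBcard_lo
      linarith
    have hn_hiR : (n : ℝ) ≤ (Δ : ℝ) + 1 := by exact_mod_cast hn_hi
    -- η bounds
    have hη0 : 0 < η := lt_of_lt_of_le (Real.rpow_pos_of_pos hΔ0 _) hη1
    have hinvΔ : (Δ : ℝ)⁻¹ ≤ η ^ 2 := by
      have h1 : ((Δ:ℝ) ^ (-(1:ℝ)/2)) ^ 2 = (Δ:ℝ)⁻¹ := by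
        rw [← Real.rpow_natCast ((Δ:ℝ) ^ (-(1:ℝ)/2)) 2, ← Real.rpow_mul hΔ0.le]
        norm_num
        exact Real.rpow_neg_one _
      calc (Δ : ℝ)⁻¹ = ((Δ:ℝ) ^ (-(1:ℝ)/2)) ^ 2 := h1.symm
        _ ≤ η ^ 2 := by
            exact pow_le_pow_left₀ (Real.rpow_nonneg hΔ0.le _) hη1 2
    -- final numeric bound
    have hb := nibble_bonferroni (γ/Δ) hpr0 (by linarith) n
    have ha_le : γ / Δ ≤ γ * η ^ 2 := by
      rw [div_eq_mul_inv]
      exact mul_le_mul_of_nonneg_left hinvΔ hγ0.le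
    have ha2 : γ / Δ ≤ γ ^ 5 / 64 := by
      nlinarith [ha_le, mul_le_mul hη2 hη2 hη0.le (by positivity : (0:ℝ) ≤ γ^2/8), hγ0.le]
    have haγ : γ / Δ ≤ γ := by
      rw [div_le_iff₀ hΔ0]; nlinarith
    have ht0 : (0:ℝ) ≤ (n:ℝ) * (γ/Δ) := mul_nonneg (Nat.cast_nonneg n) hpr0
    have ht_lo : γ - 2 * η * γ - 3 * (γ / Δ) ≤ (n:ℝ) * (γ/Δ) := by
      have h1 := mul_le_mul_of_nonneg_right hn_lo hpr0
      have hexp : ((Δ:ℝ) - 2*η*(Δ:ℝ) - 3) * (γ/Δ) = γ - 2*η*γ - 3*(γ/Δ) := by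
        field_simp
      linarith
    have ht_hi : (n:ℝ) * (γ/Δ) ≤ γ + γ / Δ := by
      have h1 := mul_le_mul_of_nonneg_right hn_hiR hpr0
      have hexp : ((Δ:ℝ) + 1) * (γ/Δ) = γ + γ/Δ := by
        field_simp
      linarith
    obtain ⟨t, ht⟩ : ∃ t : ℝ, t = (n : ℝ) * (γ / Δ) := ⟨_, rfl⟩
    rw [← ht] at hb ht0 ht_lo ht_hi
    obtain ⟨c, hc_def⟩ : ∃ c : ℝ, c = 2 * η * γ + 3 * (γ / Δ) := ⟨_, rfl⟩
    have hc0 : 0 ≤ c := by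
      rw [hc_def]; positivity
    have hγ3 : γ ^ 3 ≤ (1:ℝ)/8 := by nlinarith
    have hγ5 : γ ^ 5 ≤ γ ^ 2 / 8 := by nlinarith [hγ3, sq_nonneg γ, hγ0.le]
    have hc_le : c ≤ γ ^ 2 / 2 := by
      rw [hc_def]
      have h2ηγ : 2 * η * γ ≤ γ ^ 3 / 4 := by nlinarith [hη2, hγ0.le]
      nlinarith [ha2, hγ3, hγ5, hγ0.le, sq_nonneg γ]
    have ht_lo' : γ - c ≤ t := by rw [hc_def]; linarith [ht_lo]
    have ht1 : t ≤ 1 := by linarith [ht_hi, haγ]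
    have hγsq : γ ^ 2 ≤ γ / 2 := by
      nlinarith [mul_nonneg hγ0.le (by linarith : (0:ℝ) ≤ 1/2 - γ)]
    have hcγ : c ≤ γ := by linarith [hc_le, hγsq]
    have hfinal : 1 - t + t ^ 2 / 2 ≤ 1 - γ + γ ^ 2 := by
      nlinarith [mul_nonneg (sub_nonneg.mpr ht_lo') (by linarith : (0:ℝ) ≤ 2 - t - (γ - c)),
        mul_nonneg hc0 (by linarith : (0:ℝ) ≤ 2 * γ - c), hc_le, hc0, hγ0.le, hγ, ht1, ht0]
    calc (1 - γ/Δ) ^ n ≤ 1 - t + t ^ 2 / 2 := hb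
      _ ≤ 1 - γ + γ ^ 2 := hfinal

  calc ∑ w ∈ S, ∫ ω, Set.indicator {ω' : V → Bool | inG' w ω'} (fun _ => (1:ℝ)) ω ∂(μ[|Eset])
      ≤ ∑ w ∈ S, (1 - γ + γ^2) := Finset.sum_le_sum hterm
    _ = (1 - γ + γ^2) * S.card := by
        rw [Finset.sum_const, nsmul_eq_mul, mul_comm]
end

section
/- Let 0 < p ≤ 1/2 and let H be a bipartite graph with parts X and Y such that every pair of vertices x, x' ∈ X (including x = x') has at most ℓ common neighbors in Y. Let A be a random subset of Y including each vertex independently with probability p, and let S = |X \ N_H(A)|. Then for all r ≥ 0: P(S - E[S] ≥ r) ≤ exp(-r² / (4p(e_H(X,Y) + ℓ|X|²))). -/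
set_option linter.unusedSectionVars false
set_option linter.unusedVariables false
set_option maxHeartbeats 1000000

open MeasureTheory
open scoped ENNReal

namespace BC

variable {X Y : Type} [Fintype X] [Fintype Y] [DecidableEq Y]

noncomputable def bw (p : ℝ) (b : Bool) : ℝ := if b then p else 1 - p
noncomputable def Wt (p : ℝ) (ω : Y → Bool) : ℝ := ∏ y, bw p (ω y)
noncomputable def Ex (p : ℝ) (F : (Y → Bool) → ℝ) : ℝ := ∑ ω : Y → Bool, Wt p ω * F ω
noncomputable def ind (b : Bool) : ℝ := if b then 0 else 1

lemma bw_nonneg {p : ℝ} (hp0 : 0 ≤ p) (hp1 : p ≤ 1) (b : Bool) : 0 ≤ bw p b := by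
  cases b <;> simp [bw] <;> linarith

lemma Wt_nonneg {p : ℝ} (hp0 : 0 ≤ p) (hp1 : p ≤ 1) (ω : Y → Bool) : 0 ≤ Wt p ω :=
  Finset.prod_nonneg fun y _ => bw_nonneg hp0 hp1 _

lemma ind_nonneg (b : Bool) : 0 ≤ ind b := by cases b <;> simp [ind]
lemma ind_le_one (b : Bool) : ind b ≤ 1 := by cases b <;> simp [ind]

lemma Ex_one {p : ℝ} : Ex (Y := Y) p (fun _ => 1) = 1 := by
  unfold Ex Wt
  simp only [mul_one]
  rw [← Fintype.piFinset_univ, ← Finset.prod_univ_sum]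
  simp [bw]

lemma Ex_mono {p : ℝ} (hp0 : 0 ≤ p) (hp1 : p ≤ 1) {F G : (Y → Bool) → ℝ}
    (h : ∀ ω, F ω ≤ G ω) : Ex p F ≤ Ex p G :=
  Finset.sum_le_sum fun ω _ => mul_le_mul_of_nonneg_left (h ω) (Wt_nonneg hp0 hp1 ω)

lemma Ex_smul {p a : ℝ} {F : (Y → Bool) → ℝ} : Ex p (fun ω => a * F ω) = a * Ex p F := by
  unfold Ex; rw [Finset.mul_sum]; exact Finset.sum_congr rfl fun ω _ => by ring

lemma Ex_sum (p : ℝ) {α : Type} (s : Finset α) (F : α → (Y → Bool) → ℝ) :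
    Ex p (fun ω => ∑ x ∈ s, F x ω) = ∑ x ∈ s, Ex p (F x) := by
  unfold Ex
  simp_rw [Finset.mul_sum]
  rw [Finset.sum_comm]

lemma sum_split (y₀ : Y) (G : (Y → Bool) → ℝ) :
    ∑ ω : Y → Bool, G ω
      = ∑ ω ∈ Finset.univ.filter (fun ω : Y → Bool => ω y₀ = false),
          (G ω + G (Function.update ω y₀ true)) := by
  rw [← Finset.sum_filter_add_sum_filter_not Finset.univ (fun ω : Y → Bool => ω y₀ = false) G,
    Finset.sum_add_distrib]
  congr 1
  apply Finset.sum_nbij' (i := fun ω => Function.update ω y₀ false)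
    (j := fun ω => Function.update ω y₀ true)
  · intro a ha; simp
  · intro a ha; simp
  · intro a ha
    simp only [Finset.mem_filter, Finset.mem_univ, true_and, Bool.not_eq_false] at ha
    rw [Function.update_idem, ← ha, Function.update_eq_self]
  · intro a ha
    simp only [Finset.mem_filter, Finset.mem_univ, true_and] at ha
    rw [Function.update_idem, ← ha, Function.update_eq_self]
  · intro a ha
    simp only [Finset.mem_filter, Finset.mem_univ, true_and, Bool.not_eq_false] at ha
    rw [Function.update_idem, ← ha, Function.update_eq_self]

lemma Ex_update (p : ℝ) (y₀ : Y) (F : (Y → Bool) → ℝ) :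
    Ex p F = Ex p (fun ω => (1 - p) * F (Function.update ω y₀ false)
                           + p * F (Function.update ω y₀ true)) := by
  unfold Ex
  rw [sum_split y₀ (fun ω => Wt p ω * F ω), sum_split y₀]
  apply Finset.sum_congr rfl
  intro ω hω
  have hω0 : ω y₀ = false := by simpa using hω
  set R : ℝ := ∏ y ∈ Finset.univ.erase y₀, bw p (ω y) with hR
  have hup : ∀ b, Wt p (Function.update ω y₀ b) = bw p b * R := by
    intro b
    unfold Wt
    rw [← Finset.mul_prod_erase Finset.univ _ (Finset.mem_univ y₀), Function.update_self]
    congr 1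
    exact Finset.prod_congr rfl fun y hy =>
      congrArg _ (Function.update_of_ne (Finset.mem_erase.mp hy).1 _ _)
  have h3 : Function.update ω y₀ false = ω := hω0 ▸ Function.update_eq_self y₀ ω
  have h1 : Wt p ω = (1 - p) * R := by rw [← h3, hup false]; simp [bw]
  have h2 : Wt p (Function.update ω y₀ true) = p * R := by rw [hup]; simp [bw]
  have h4 : Function.update (Function.update ω y₀ true) y₀ false = ω := by
    rw [Function.update_idem]; exact h3
  have h5 : Function.update (Function.update ω y₀ true) y₀ true
      = Function.update ω y₀ true := Function.update_idem ..
  simp only [h1, h2, h3, h4, h5]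
  ring

lemma Ex_prod_ind (p : ℝ) (A : Finset Y) :
    Ex p (fun ω => ∏ y ∈ A, ind (ω y)) = (1 - p) ^ A.card := by
  classical
  induction A using Finset.induction with
  | empty => simpa using (Ex_one (Y := Y) (p := p))
  | @insert y₀ A hy₀ ih =>
    rw [Ex_update p y₀]
    have : ∀ ω : Y → Bool,
        (1 - p) * (∏ y ∈ insert y₀ A, ind (Function.update ω y₀ false y))
          + p * (∏ y ∈ insert y₀ A, ind (Function.update ω y₀ true y))
        = (1 - p) * ∏ y ∈ A, ind (ω y) := by
      intro ω
      rw [Finset.prod_insert hy₀, Finset.prod_insert hy₀, Function.update_self,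
        Function.update_self]
      have he : ∀ b : Bool, ∀ y ∈ A, ind (Function.update ω y₀ b y) = ind (ω y) := by
        intro b y hy
        exact congrArg _ (Function.update_of_ne (fun h => hy₀ (by rwa [h] at hy)) _ _)
      rw [Finset.prod_congr rfl (he false), Finset.prod_congr rfl (he true)]
      simp [ind]
    simp_rw [this]
    rw [Ex_smul, ih, Finset.card_insert_of_notMem hy₀, pow_succ]
    ring

lemma exp_neg_le_quadratic {s : ℝ} (hs : 0 ≤ s) : Real.exp (-s) ≤ 1 - s + s ^ 2 / 2 := by
  have key : ∀ u ∈ Set.Ici (0 : ℝ), HasDerivAt (fun v : ℝ => 1 - v + v ^ 2 / 2 - Real.exp (-v))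
      (-1 + u + Real.exp (-u)) u := by
    intro u _
    have h1 : HasDerivAt (fun v : ℝ => Real.exp (-v)) (-Real.exp (-u)) u := by
      exact ((Real.hasDerivAt_exp (-u)).comp u (hasDerivAt_neg u)).congr_deriv (by ring)
    have h2 : HasDerivAt (fun v : ℝ => 1 - v + v ^ 2 / 2) (-1 + u) u := by
      have : HasDerivAt (fun v : ℝ => v ^ 2 / 2) u u := by
        simpa using (hasDerivAt_pow 2 u).div_const 2
      exact (((hasDerivAt_const u (1:ℝ)).sub (hasDerivAt_id u)).add this).congr_deriv (by ring)
    exact (h2.sub h1).congr_deriv (by ring)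
  have mono : MonotoneOn (fun v : ℝ => 1 - v + v ^ 2 / 2 - Real.exp (-v)) (Set.Ici 0) := by
    apply monotoneOn_of_deriv_nonneg (convex_Ici 0)
    · exact Continuous.continuousOn (by continuity)
    · intro u hu
      exact (key u (interior_subset hu)).differentiableAt.differentiableWithinAt
    · intro u hu
      rw [(key u (interior_subset hu)).deriv]
      have := Real.add_one_le_exp (-u)
      linarith
  have h0 : (fun v : ℝ => 1 - v + v ^ 2 / 2 - Real.exp (-v)) 0 = 0 := by simp
  have := mono (Set.self_mem_Ici) hs hs
  simp only [h0] at this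
  linarith [this]

lemma key_scalar {p s : ℝ} (hp0 : 0 ≤ p) (hp1 : p ≤ 1) (hs : 0 ≤ s) :
    (1 - p) * Real.exp (p * s) + p * Real.exp (-((1 - p) * s))
      ≤ Real.exp (p * s ^ 2 / 2) := by
  have e1 : (1 - p) * Real.exp (p * s) + p * Real.exp (-((1 - p) * s))
      = Real.exp (p * s) * (1 - p * (1 - Real.exp (-s))) := by
    have : -((1 - p) * s) = p * s + (-s) := by ring
    rw [this, Real.exp_add]
    ring
  rw [e1]
  have hx0 : 0 ≤ 1 - Real.exp (-s) := by
    have := Real.exp_le_one_iff.mpr (neg_nonpos.mpr hs)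
    linarith
  have h2 : 1 - p * (1 - Real.exp (-s)) ≤ Real.exp (-(p * (1 - Real.exp (-s)))) := by
    have := Real.add_one_le_exp (-(p * (1 - Real.exp (-s))))
    linarith
  have h3 : Real.exp (p * s) * (1 - p * (1 - Real.exp (-s)))
      ≤ Real.exp (p * s) * Real.exp (-(p * (1 - Real.exp (-s)))) :=
    mul_le_mul_of_nonneg_left h2 (Real.exp_nonneg _)
  rw [← Real.exp_add] at h3
  refine h3.trans (Real.exp_le_exp.mpr ?_)
  have h4 : Real.exp (-s) ≤ 1 - s + s ^ 2 / 2 := exp_neg_le_quadratic hs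
  nlinarith

noncomputable def gfun (p : ℝ) (N : X → Finset Y) (T : Finset Y) (ω : Y → Bool) : ℝ :=
  ∑ x, ∏ y ∈ N x, (if y ∈ T then ind (ω y) else (1 - p))

noncomputable def dY (N : X → Finset Y) (y : Y) : ℕ :=
  (Finset.univ.filter (fun x : X => y ∈ N x)).card

lemma gfun_empty (p : ℝ) (N : X → Finset Y) (ω : Y → Bool) :
    gfun p N ∅ ω = ∑ x, (1 - p) ^ (N x).card := by
  unfold gfun
  refine Finset.sum_congr rfl fun x _ => ?_
  have h : ∀ y ∈ N x, (if y ∈ (∅ : Finset Y) then ind (ω y) else (1 - p)) = (1 - p) :=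
    fun y _ => by simp
  rw [Finset.prod_congr rfl h, Finset.prod_const]

lemma mgf_core {p : ℝ} (hp0 : 0 ≤ p) (hp1 : p ≤ 1) (N : X → Finset Y)
    {t : ℝ} (ht : 0 ≤ t) (T : Finset Y) :
    Ex p (fun ω => Real.exp (t * (gfun p N T ω - ∑ x, (1 - p) ^ (N x).card)))
      ≤ Real.exp (∑ y ∈ T, p * t ^ 2 * (dY N y : ℝ) ^ 2 / 2) := by
  classical
  set μc : ℝ := ∑ x, (1 - p) ^ (N x).card with hμc
  induction T using Finset.induction with
  | empty =>
    simp only [gfun_empty, ← hμc]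
    simpa using le_of_eq (Ex_one (Y := Y) (p := p))
  | @insert y₀ T hy₀ ih =>
    rw [Ex_update p y₀]
    set Wv : (Y → Bool) → ℝ := fun ω =>
      ∑ x ∈ Finset.univ.filter (fun x : X => y₀ ∈ N x),
        ∏ y ∈ (N x).erase y₀, (if y ∈ T then ind (ω y) else (1 - p)) with hWv
    have factor_nonneg : ∀ (ω : Y → Bool) (y : Y),
        0 ≤ (if y ∈ T then ind (ω y) else (1 - p)) := by
      intro ω y; split
      · exact ind_nonneg _
      · linarith
    have factor_le_one : ∀ (ω : Y → Bool) (y : Y),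
        (if y ∈ T then ind (ω y) else (1 - p)) ≤ 1 := by
      intro ω y; split
      · exact ind_le_one _
      · linarith
    have hWv0 : ∀ ω, 0 ≤ Wv ω := fun ω =>
      Finset.sum_nonneg fun x _ => Finset.prod_nonneg fun y _ => factor_nonneg ω y
    have hWvd : ∀ ω, Wv ω ≤ (dY N y₀ : ℝ) := by
      intro ω
      calc Wv ω ≤ ∑ x ∈ Finset.univ.filter (fun x : X => y₀ ∈ N x), 1 :=
            Finset.sum_le_sum fun x _ =>
              Finset.prod_le_one (fun y _ => factor_nonneg ω y) (fun y _ => factor_le_one ω y)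
        _ = (dY N y₀ : ℝ) := by simp [dY]
    have hdec : ∀ (ω : Y → Bool) (b : Bool),
        gfun p N (insert y₀ T) (Function.update ω y₀ b)
          = gfun p N T ω + (ind b - (1 - p)) * Wv ω := by
      intro ω b
      unfold gfun
      rw [← Finset.sum_filter_add_sum_filter_not Finset.univ (fun x : X => y₀ ∈ N x),
        ← Finset.sum_filter_add_sum_filter_not Finset.univ (fun x : X => y₀ ∈ N x)
          (fun x => ∏ y ∈ N x, (if y ∈ T then ind (ω y) else (1 - p)))]
      have hsame : ∀ b' : Bool, ∀ x, y₀ ∉ N x →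
          (∏ y ∈ N x, (if y ∈ insert y₀ T then ind (Function.update ω y₀ b' y) else (1 - p)))
            = ∏ y ∈ N x, (if y ∈ T then ind (ω y) else (1 - p)) := by
        intro b' x hx
        refine Finset.prod_congr rfl fun y hy => ?_
        have hne : y ≠ y₀ := fun h => hx (h ▸ hy)
        rw [Function.update_of_ne hne]
        simp [Finset.mem_insert, hne]
      have hsplit : ∀ b' : Bool, ∀ x, y₀ ∈ N x →
          (∏ y ∈ N x, (if y ∈ insert y₀ T then ind (Function.update ω y₀ b' y) else (1 - p)))
            = ind b' * ∏ y ∈ (N x).erase y₀, (if y ∈ T then ind (ω y) else (1 - p)) := by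
        intro b' x hx
        rw [← Finset.mul_prod_erase (N x) _ hx]
        congr 1
        · simp
        · refine Finset.prod_congr rfl fun y hy => ?_
          have hne : y ≠ y₀ := (Finset.mem_erase.mp hy).1
          rw [Function.update_of_ne hne]
          simp [Finset.mem_insert, hne]
      have hT : ∀ x, y₀ ∈ N x →
          (∏ y ∈ N x, (if y ∈ T then ind (ω y) else (1 - p)))
            = (1 - p) * ∏ y ∈ (N x).erase y₀, (if y ∈ T then ind (ω y) else (1 - p)) := by
        intro x hx
        rw [← Finset.mul_prod_erase (N x) _ hx]
        congr 1
        simp [hy₀]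
      rw [Finset.sum_congr rfl (fun x hx => hsplit b x (Finset.mem_filter.mp hx).2),
        Finset.sum_congr rfl (fun x hx => hsame b x (by simpa using (Finset.mem_filter.mp hx).2)),
        Finset.sum_congr rfl (fun x hx => hT x (Finset.mem_filter.mp hx).2)]
      rw [← Finset.mul_sum, ← Finset.mul_sum, hWv]
      ring
    have hpt : ∀ ω : Y → Bool,
        (1 - p) * Real.exp (t * (gfun p N (insert y₀ T) (Function.update ω y₀ false) - μc))
          + p * Real.exp (t * (gfun p N (insert y₀ T) (Function.update ω y₀ true) - μc))
        ≤ Real.exp (p * t ^ 2 * (dY N y₀ : ℝ) ^ 2 / 2)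
            * Real.exp (t * (gfun p N T ω - μc)) := by
      intro ω
      rw [hdec ω false, hdec ω true]
      have e1 : t * (gfun p N T ω + (ind false - (1 - p)) * Wv ω - μc)
          = (t * (gfun p N T ω - μc)) + p * (t * Wv ω) := by simp [ind]; ring
      have e2 : t * (gfun p N T ω + (ind true - (1 - p)) * Wv ω - μc)
          = (t * (gfun p N T ω - μc)) + -((1 - p) * (t * Wv ω)) := by simp [ind]; ring
      rw [e1, e2, Real.exp_add, Real.exp_add]
      have hs0 : 0 ≤ t * Wv ω := mul_nonneg ht (hWv0 ω)
      have hks := key_scalar hp0 hp1 hs0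
      have hmono : p * (t * Wv ω) ^ 2 / 2 ≤ p * t ^ 2 * (dY N y₀ : ℝ) ^ 2 / 2 := by
        have h1 : (t * Wv ω) ^ 2 ≤ t ^ 2 * (dY N y₀ : ℝ) ^ 2 := by
          rw [mul_pow]
          exact mul_le_mul_of_nonneg_left
            (pow_le_pow_left₀ (hWv0 ω) (hWvd ω) 2) (sq_nonneg t)
        nlinarith
      calc (1 - p) * (Real.exp (t * (gfun p N T ω - μc)) * Real.exp (p * (t * Wv ω)))
            + p * (Real.exp (t * (gfun p N T ω - μc)) * Real.exp (-((1 - p) * (t * Wv ω))))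
          = Real.exp (t * (gfun p N T ω - μc))
              * ((1 - p) * Real.exp (p * (t * Wv ω))
                  + p * Real.exp (-((1 - p) * (t * Wv ω)))) := by ring
        _ ≤ Real.exp (t * (gfun p N T ω - μc)) * Real.exp (p * (t * Wv ω) ^ 2 / 2) :=
            mul_le_mul_of_nonneg_left hks (Real.exp_nonneg _)
        _ ≤ Real.exp (t * (gfun p N T ω - μc))
              * Real.exp (p * t ^ 2 * (dY N y₀ : ℝ) ^ 2 / 2) :=
            mul_le_mul_of_nonneg_left (Real.exp_le_exp.mpr hmono) (Real.exp_nonneg _)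
        _ = _ := by ring
    calc Ex p (fun ω =>
          (1 - p) * Real.exp (t * (gfun p N (insert y₀ T) (Function.update ω y₀ false) - μc))
            + p * Real.exp (t * (gfun p N (insert y₀ T) (Function.update ω y₀ true) - μc)))
        ≤ Ex p (fun ω => Real.exp (p * t ^ 2 * (dY N y₀ : ℝ) ^ 2 / 2)
            * Real.exp (t * (gfun p N T ω - μc))) := Ex_mono hp0 hp1 hpt
      _ = Real.exp (p * t ^ 2 * (dY N y₀ : ℝ) ^ 2 / 2)
            * Ex p (fun ω => Real.exp (t * (gfun p N T ω - μc))) := Ex_smul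
      _ ≤ Real.exp (p * t ^ 2 * (dY N y₀ : ℝ) ^ 2 / 2)
            * Real.exp (∑ y ∈ T, p * t ^ 2 * (dY N y : ℝ) ^ 2 / 2) :=
          mul_le_mul_of_nonneg_left ih (Real.exp_nonneg _)
      _ = Real.exp (∑ y ∈ insert y₀ T, p * t ^ 2 * (dY N y : ℝ) ^ 2 / 2) := by
          rw [Finset.sum_insert hy₀, Real.exp_add]

lemma P_singleton {p : ℝ} (hp0 : 0 ≤ p) (hp1 : p ≤ 1) (hp' : ENNReal.ofReal p ≤ 1)
    (ω : Y → Bool) :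
    (Measure.pi fun _ : Y => (PMF.bernoulli (Real.toNNReal p) (ENNReal.coe_le_one_iff.mp hp')).toMeasure) {ω}
      = ENNReal.ofReal (Wt p ω) := by
  have hset : ({ω} : Set (Y → Bool)) = Set.pi Set.univ (fun y => {ω y}) := by
    ext ω'
    simp [Set.mem_pi, funext_iff, eq_comm]
  rw [hset, Measure.pi_pi]
  have hfac : ∀ y : Y, (PMF.bernoulli (Real.toNNReal p) (ENNReal.coe_le_one_iff.mp hp')).toMeasure {ω y}
      = ENNReal.ofReal (bw p (ω y)) := by
    intro y
    rw [PMF.toMeasure_apply_singleton _ _ (measurableSet_singleton _), PMF.bernoulli_apply]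
    cases h : ω y
    · simp only [Bool.cond_false, bw, if_neg Bool.false_ne_true]
      rw [ENNReal.coe_sub, ENNReal.coe_one]
      show 1 - ENNReal.ofReal p = _
      rw [show (1 : ℝ≥0∞) = ENNReal.ofReal 1 by simp, ← ENNReal.ofReal_sub _ hp0]
    · simp [bw]; rfl
  simp only [hfac]
  rw [← ENNReal.ofReal_prod_of_nonneg (fun y _ => bw_nonneg hp0 hp1 (ω y))]
  rfl

lemma integral_eq_Ex {p : ℝ} (hp0 : 0 ≤ p) (hp1 : p ≤ 1) (hp' : ENNReal.ofReal p ≤ 1)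
    (F : (Y → Bool) → ℝ) :
    ∫ ω, F ω ∂(Measure.pi fun _ : Y => (PMF.bernoulli (Real.toNNReal p) (ENNReal.coe_le_one_iff.mp hp')).toMeasure)
      = Ex p F := by
  rw [integral_fintype (Integrable.of_finite)]
  unfold Ex
  refine Finset.sum_congr rfl fun ω _ => ?_
  rw [Measure.real_def, P_singleton hp0 hp1 hp' ω, ENNReal.toReal_ofReal (Wt_nonneg hp0 hp1 ω), smul_eq_mul]

lemma chernoff {p : ℝ} (hp0 : 0 ≤ p) (hp1 : p ≤ 1) (hp' : ENNReal.ofReal p ≤ 1)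
    (S : (Y → Bool) → ℝ) (μ t r : ℝ) (ht : 0 ≤ t) :
    (Measure.pi fun _ : Y => (PMF.bernoulli (Real.toNNReal p) (ENNReal.coe_le_one_iff.mp hp')).toMeasure)
        {ω | r ≤ S ω - μ}
      ≤ ENNReal.ofReal (Ex p (fun ω => Real.exp (t * (S ω - μ))) * Real.exp (-(t * r))) := by
  set P := Measure.pi fun _ : Y => (PMF.bernoulli (Real.toNNReal p) (ENNReal.coe_le_one_iff.mp hp')).toMeasure with hPdef
  set G : (Y → Bool) → ℝ≥0∞ := fun ω =>
    ENNReal.ofReal (Real.exp (t * (S ω - μ)) * Real.exp (-(t * r))) with hG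
  have hmeas : Measurable G := measurable_of_countable _
  have h1 : ∀ ω ∈ {ω | r ≤ S ω - μ}, (1 : ℝ≥0∞) ≤ G ω := by
    intro ω hω
    show (1 : ℝ≥0∞) ≤ ENNReal.ofReal (Real.exp (t * (S ω - μ)) * Real.exp (-(t * r)))
    rw [← Real.exp_add]
    refine ENNReal.one_le_ofReal.mpr (Real.one_le_exp ?_)
    have : r ≤ S ω - μ := hω
    nlinarith
  calc P {ω | r ≤ S ω - μ} = ∫⁻ _ in {ω | r ≤ S ω - μ}, 1 ∂P := (setLIntegral_one _).symm
    _ ≤ ∫⁻ ω in {ω | r ≤ S ω - μ}, G ω ∂P := setLIntegral_mono hmeas h1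
    _ ≤ ∫⁻ ω, G ω ∂P := setLIntegral_le_lintegral _ _
    _ = ∑ ω : Y → Bool, G ω * P {ω} := lintegral_fintype _
    _ = ENNReal.ofReal (∑ ω : Y → Bool,
          Wt p ω * (Real.exp (t * (S ω - μ)) * Real.exp (-(t * r)))) := by
        rw [ENNReal.ofReal_sum_of_nonneg]
        · refine Finset.sum_congr rfl fun ω _ => ?_
          rw [P_singleton hp0 hp1 hp' ω, hG, ← ENNReal.ofReal_mul (by positivity), mul_comm]
        · intro ω _
          have := Wt_nonneg hp0 hp1 ω
          positivity
    _ = ENNReal.ofReal (Ex p (fun ω => Real.exp (t * (S ω - μ))) * Real.exp (-(t * r))) := by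
        congr 1
        unfold Ex
        rw [Finset.sum_mul]
        exact Finset.sum_congr rfl fun ω _ => by ring

lemma sum_dY_sq_le [DecidableEq X] (N : X → Finset Y) (ℓ : ℕ)
    (hcod : ∀ x x' : X, (Finset.univ.filter fun y => y ∈ N x ∧ y ∈ N x').card ≤ ℓ) :
    ∑ y : Y, ((dY N y : ℝ)) ^ 2 ≤ (ℓ : ℝ) * (Fintype.card X) ^ 2 := by
  have hnat : ∑ y : Y, (dY N y) ^ 2 ≤ ℓ * (Fintype.card X) ^ 2 := by
    have hd : ∀ y, dY N y = ∑ x : X, if y ∈ N x then 1 else 0 := by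
      intro y; rw [dY, Finset.card_filter]
    have hsq : ∀ y : Y, (dY N y) ^ 2
        = ∑ x : X, ∑ x' : X, if y ∈ N x ∧ y ∈ N x' then 1 else 0 := by
      intro y
      rw [sq, hd, Finset.sum_mul_sum]
      refine Finset.sum_congr rfl fun x _ => Finset.sum_congr rfl fun x' _ => ?_
      by_cases h1 : y ∈ N x <;> by_cases h2 : y ∈ N x' <;> simp [h1, h2]
    calc ∑ y : Y, (dY N y) ^ 2
        = ∑ x : X, ∑ x' : X, ∑ y : Y, (if y ∈ N x ∧ y ∈ N x' then 1 else 0) := by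
          rw [Finset.sum_congr rfl fun y _ => hsq y, Finset.sum_comm]
          exact Finset.sum_congr rfl fun x _ => Finset.sum_comm
      _ ≤ ∑ _x : X, ∑ _x' : X, ℓ := by
          refine Finset.sum_le_sum fun x _ => Finset.sum_le_sum fun x' _ => ?_
          rw [← Finset.card_filter]
          exact hcod x x'
      _ = ℓ * (Fintype.card X) ^ 2 := by
          simp [Finset.sum_const, Finset.card_univ]; ring
  calc ∑ y : Y, ((dY N y : ℝ)) ^ 2 = ((∑ y : Y, (dY N y) ^ 2 : ℕ) : ℝ) := by push_cast; ring
    _ ≤ (((ℓ * (Fintype.card X) ^ 2 : ℕ)) : ℝ) := Nat.cast_le.mpr hnat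
    _ = (ℓ : ℝ) * (Fintype.card X) ^ 2 := by push_cast; ring

lemma natcard_set_eq_filter {α : Type} [Fintype α] (Q : α → Prop) [DecidablePred Q] :
    Nat.card {a | Q a} = (Finset.univ.filter Q).card := by
  rw [Nat.card_eq_fintype_card]
  exact Fintype.card_subtype _

lemma prod_ind_eq (A : Finset Y) (ω : Y → Bool) :
    (∏ y ∈ A, ind (ω y)) = if (∀ y ∈ A, ω y = false) then 1 else 0 := by
  have : ∀ y ∈ A, ind (ω y) = if ω y = false then 1 else 0 := by
    intro y _; cases h : ω y <;> simp [ind]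
  rw [Finset.prod_congr rfl this, Finset.prod_boole]
  congr 1

end BC
open BC in
theorem bipartite_concentration {X Y : Type} [Fintype X] [Fintype Y]
    (adj : X → Y → Prop) (p : ℝ) (hp0 : 0 < p) (hp : p ≤ 1/2)
    (hp' : ENNReal.ofReal p ≤ 1) (ℓ : ℕ)
    (hcod : ∀ x x' : X, Nat.card {y : Y | adj x y ∧ adj x' y} ≤ ℓ)
    (P : Measure (Y → Bool))
    (hP : P = Measure.pi fun _ : Y => (PMF.bernoulli (Real.toNNReal p) (ENNReal.coe_le_one_iff.mp hp')).toMeasure)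
    (S : (Y → Bool) → ℝ)
    (hS : ∀ ω, S ω = Nat.card {x : X | ∀ y, adj x y → ω y = false})
    (r : ℝ) (hr : 0 ≤ r) :
    P {ω | r ≤ S ω - ∫ ω', S ω' ∂P} ≤
      ENNReal.ofReal (Real.exp (-(r^2) /
        (4 * p * ((∑ x : X, (Nat.card {y : Y | adj x y} : ℝ)) + ℓ * (Fintype.card X)^2)))) := by
  classical
  have hp1 : p ≤ 1 := hp.trans (by norm_num)
  subst hP
  haveI : IsProbabilityMeasure
      (Measure.pi fun _ : Y => (PMF.bernoulli (Real.toNNReal p) (ENNReal.coe_le_one_iff.mp hp')).toMeasure) :=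
    inferInstance
  -- the case r = 0
  rcases eq_or_lt_of_le hr with hr0 | hrpos
  · rw [← hr0]
    have hz : -((0:ℝ)^2) / (4 * p * ((∑ x : X, (Nat.card {y : Y | adj x y} : ℝ))
        + ℓ * (Fintype.card X)^2)) = 0 := by norm_num
    rw [hz, Real.exp_zero, ENNReal.ofReal_one]
    exact prob_le_one
  set N : X → Finset Y := fun x => Finset.univ.filter fun y => adj x y with hN
  -- degenerate case : X empty
  by_cases hX : Fintype.card X = 0
  · haveI : IsEmpty X := Fintype.card_eq_zero_iff.mp hX
    have hS0 : ∀ ω, S ω = 0 := by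
      intro ω
      rw [hS ω]
      have : Nat.card {x : X | ∀ y, adj x y → ω y = false} = 0 := Nat.card_of_isEmpty
      rw [this]; norm_num
    have hint : (∫ ω', S ω' ∂(Measure.pi fun _ : Y => (PMF.bernoulli (Real.toNNReal p) (ENNReal.coe_le_one_iff.mp hp')).toMeasure)) = 0 := by
      rw [show S = fun _ => (0:ℝ) from funext hS0]
      simp
    have hempty : {ω | r ≤ S ω - ∫ ω', S ω' ∂(Measure.pi fun _ : Y =>
        (PMF.bernoulli (Real.toNNReal p) (ENNReal.coe_le_one_iff.mp hp')).toMeasure)} = ∅ := by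
      ext ω
      simp only [Set.mem_setOf_eq, Set.mem_empty_iff_false, iff_false, not_le]
      rw [hint, hS0]
      linarith
    rw [hempty]
    simp
  -- degenerate case : ℓ = 0
  by_cases hl : ℓ = 0
  · have hnadj : ∀ x y, ¬ adj x y := by
      intro x y hxy
      have h := hcod x x
      rw [hl, Nat.le_zero] at h
      rw [natcard_set_eq_filter] at h
      have hmem : y ∈ Finset.univ.filter (fun y => adj x y ∧ adj x y) := by
        simp [hxy]
      rw [Finset.card_eq_zero.mp h] at hmem
      exact absurd hmem (Finset.notMem_empty y)
    have hSc : ∀ ω, S ω = (Fintype.card X : ℝ) := by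
      intro ω
      rw [hS ω]
      have : {x : X | ∀ y, adj x y → ω y = false} = Set.univ := by
        ext x
        simp only [Set.mem_setOf_eq, Set.mem_univ, iff_true]
        exact fun y h => absurd h (hnadj x y)
      rw [this, Nat.card_univ, Nat.card_eq_fintype_card]
    have hint : (∫ ω', S ω' ∂(Measure.pi fun _ : Y => (PMF.bernoulli (Real.toNNReal p) (ENNReal.coe_le_one_iff.mp hp')).toMeasure)) = (Fintype.card X : ℝ) := by
      rw [show S = fun _ => (Fintype.card X : ℝ) from funext hSc]
      simp
    have hempty : {ω | r ≤ S ω - ∫ ω', S ω' ∂(Measure.pi fun _ : Y =>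
        (PMF.bernoulli (Real.toNNReal p) (ENNReal.coe_le_one_iff.mp hp')).toMeasure)} = ∅ := by
      ext ω
      simp only [Set.mem_setOf_eq, Set.mem_empty_iff_false, iff_false, not_le]
      rw [hint, hSc]
      linarith
    rw [hempty]
    simp
  -- main case
  have hcard : ∀ x x', (Finset.univ.filter fun y => y ∈ N x ∧ y ∈ N x').card ≤ ℓ := by
    intro x x'
    calc (Finset.univ.filter fun y => y ∈ N x ∧ y ∈ N x').card
        = (Finset.univ.filter fun y => adj x y ∧ adj x' y).card := by
          congr 1
          apply Finset.filter_congr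
          intro y _
          simp [hN]
      _ ≤ ℓ := by rw [← natcard_set_eq_filter]; exact hcod x x'
  have hSgf : ∀ ω, S ω = gfun p N Finset.univ ω := by
    intro ω
    rw [hS ω, gfun]
    have h1 : Nat.card {x : X | ∀ y, adj x y → ω y = false}
        = (Finset.univ.filter fun x : X => ∀ y ∈ N x, ω y = false).card := by
      rw [natcard_set_eq_filter]
      congr 1
      apply Finset.filter_congr
      intro x _
      simp [hN]
    rw [h1, Finset.card_filter]
    push_cast
    refine Finset.sum_congr rfl fun x _ => ?_
    rw [show (∏ y ∈ N x, if y ∈ (Finset.univ : Finset Y) then ind (ω y) else (1-p))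
        = ∏ y ∈ N x, ind (ω y) from Finset.prod_congr rfl fun y _ => by simp, prod_ind_eq]
  have hμ : (∫ ω', S ω' ∂(Measure.pi fun _ : Y => (PMF.bernoulli (Real.toNNReal p) (ENNReal.coe_le_one_iff.mp hp')).toMeasure)) = ∑ x, (1-p)^(N x).card := by
    rw [integral_eq_Ex hp0.le hp1 hp']
    rw [show S = fun ω => ∑ x, ∏ y ∈ N x, ind (ω y) from funext fun ω => by
      rw [hSgf ω, gfun]
      exact Finset.sum_congr rfl fun x _ => Finset.prod_congr rfl fun y _ => by simp]
    rw [Ex_sum]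
    exact Finset.sum_congr rfl fun x _ => Ex_prod_ind p (N x)
  set e : ℝ := ∑ x : X, (Nat.card {y : Y | adj x y} : ℝ) with he
  have he0 : 0 ≤ e := Finset.sum_nonneg fun x _ => Nat.cast_nonneg _
  set B : ℝ := (ℓ : ℝ) * (Fintype.card X)^2 with hB
  have hBpos : 0 < B := by
    have h1 : (1:ℝ) ≤ (ℓ:ℝ) := by exact_mod_cast Nat.one_le_iff_ne_zero.mpr hl
    have h2 : (1:ℝ) ≤ (Fintype.card X : ℝ) := by
      exact_mod_cast Nat.one_le_iff_ne_zero.mpr hX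
    nlinarith
  set t : ℝ := r / (p * B) with htdef
  have ht0 : 0 ≤ t := div_nonneg hr (by positivity)
  refine le_trans (chernoff hp0.le hp1 hp' S
    (∫ ω', S ω' ∂(Measure.pi fun _ : Y => (PMF.bernoulli (Real.toNNReal p) (ENNReal.coe_le_one_iff.mp hp')).toMeasure))
    t r ht0) ?_
  apply ENNReal.ofReal_le_ofReal
  have hEx : Ex p (fun ω => Real.exp (t * (S ω - ∫ ω', S ω' ∂(Measure.pi fun _ : Y => (PMF.bernoulli (Real.toNNReal p) (ENNReal.coe_le_one_iff.mp hp')).toMeasure))))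
      ≤ Real.exp (∑ y : Y, p * t^2 * (dY N y : ℝ)^2 / 2) := by
    rw [show (fun ω => Real.exp (t * (S ω - ∫ ω', S ω' ∂(Measure.pi fun _ : Y => (PMF.bernoulli (Real.toNNReal p) (ENNReal.coe_le_one_iff.mp hp')).toMeasure))))
        = fun ω => Real.exp (t * (gfun p N Finset.univ ω - ∑ x, (1-p)^(N x).card)) from
      funext fun ω => by rw [hSgf ω, hμ]]
    exact mgf_core hp0.le hp1 N ht0 Finset.univ
  calc Ex p (fun ω => Real.exp (t * (S ω - ∫ ω', S ω' ∂(Measure.pi fun _ : Y => (PMF.bernoulli (Real.toNNReal p) (ENNReal.coe_le_one_iff.mp hp')).toMeasure)))) * Real.exp (-(t * r))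
      ≤ Real.exp (∑ y : Y, p * t^2 * (dY N y : ℝ)^2 / 2) * Real.exp (-(t * r)) :=
        mul_le_mul_of_nonneg_right hEx (Real.exp_nonneg _)
    _ = Real.exp ((∑ y : Y, p * t^2 * (dY N y : ℝ)^2 / 2) + (-(t * r))) :=
        (Real.exp_add _ _).symm
    _ ≤ Real.exp (-(r^2) / (4 * p * (e + B))) := by
        apply Real.exp_le_exp.mpr
        have hsum : (∑ y : Y, p * t^2 * (dY N y : ℝ)^2 / 2)
            = p * t^2 / 2 * ∑ y : Y, (dY N y : ℝ)^2 := by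
          rw [Finset.mul_sum]
          exact Finset.sum_congr rfl fun y _ => by ring
        have hV : ∑ y : Y, ((dY N y : ℝ))^2 ≤ B := sum_dY_sq_le N ℓ hcard
        have step1 : p * t^2 / 2 * (∑ y : Y, (dY N y : ℝ)^2) ≤ p * t^2 / 2 * B :=
          mul_le_mul_of_nonneg_left hV (by positivity)
        have step2 : p * t^2 / 2 * B - t * r = -(r^2) / (2 * (p * B)) := by
          rw [htdef]
          field_simp
          ring
        have step3 : -(r^2) / (2 * (p * B)) ≤ -(r^2) / (4 * p * (e + B)) := by
          rw [div_le_div_iff₀ (by positivity) (by positivity)]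
          nlinarith [sq_nonneg r, mul_nonneg (mul_nonneg (sq_nonneg r) hp0.le) he0,
            mul_nonneg (mul_nonneg (sq_nonneg r) hp0.le) hBpos.le]
        rw [hsum]
        linarith
end

section
/- For Δ ≥ 2 and n ≥ 2Δ⁴, let G be a graph on n vertices with maximum degree Δ(G) ≤ Δ. Then there exists a graph Ḡ on the same vertex set with E(Ḡ) ⊇ E(G) such that every vertex of Ḡ has degree Δ or Δ+1, and the maximum codegree of Ḡ is at most max{Δ₂(G), 1}. -/
open scoped Classical
open Finset

namespace RegAux

variable {V : Type} [Fintype V]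

def addEdge (H : SimpleGraph V) (u v : V) : SimpleGraph V where
  Adj x y := x ≠ y ∧ (H.Adj x y ∨ (x = u ∧ y = v) ∨ (x = v ∧ y = u))
  symm := by
    constructor
    intro x y h
    refine ⟨Ne.symm h.1, ?_⟩
    rcases h.2 with h | h | h
    · exact Or.inl h.symm
    · exact Or.inr (Or.inr ⟨h.2, h.1⟩)
    · exact Or.inr (Or.inl ⟨h.2, h.1⟩)
  loopless := ⟨fun x h => h.1 rfl⟩

noncomputable def deg (H : SimpleGraph V) (v : V) : ℕ := (H.neighborSet v).ncard

noncomputable def codeg (H : SimpleGraph V) (u v : V) : ℕ :=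
  (H.neighborSet u ∩ H.neighborSet v).ncard

noncomputable def Phi (Δ : ℕ) (H : SimpleGraph V) : ℕ := ∑ v, (Δ - deg H v)

noncomputable def big (Δ : ℕ) (H : SimpleGraph V) : ℕ := {v | deg H v = Δ + 1}.ncard

def B3 (H : SimpleGraph V) (u : V) : Set V :=
  {x | x = u ∨ H.Adj u x ∨ (∃ a, H.Adj u a ∧ H.Adj a x) ∨
    ∃ a b, H.Adj u a ∧ H.Adj a b ∧ H.Adj b x}

lemma le_addEdge (H : SimpleGraph V) (u v : V) : H ≤ addEdge H u v :=
  fun _ _ h => ⟨h.ne, Or.inl h⟩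

lemma addEdge_comm (H : SimpleGraph V) (u v : V) : addEdge H u v = addEdge H v u := by
  ext x y
  show _ ≠ _ ∧ _ ↔ _ ≠ _ ∧ _
  tauto

lemma ns_addEdge_u (H : SimpleGraph V) {u v : V} (h : u ≠ v) :
    (addEdge H u v).neighborSet u = insert v (H.neighborSet u) := by
  ext y
  simp only [SimpleGraph.mem_neighborSet, Set.mem_insert_iff]
  constructor
  · rintro ⟨hne, hA | ⟨-, rfl⟩ | ⟨rfl, rfl⟩⟩
    · exact Or.inr hA
    · exact Or.inl rfl
    · exact absurd rfl hne
  · rintro (rfl | hA)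
    · exact ⟨h, Or.inr (Or.inl ⟨rfl, rfl⟩)⟩
    · exact ⟨hA.ne, Or.inl hA⟩

lemma ns_addEdge_v (H : SimpleGraph V) {u v : V} (h : u ≠ v) :
    (addEdge H u v).neighborSet v = insert u (H.neighborSet v) := by
  rw [addEdge_comm]
  exact ns_addEdge_u H h.symm

lemma ns_addEdge_other (H : SimpleGraph V) {u v x : V} (hx : x ≠ u) (hx' : x ≠ v) :
    (addEdge H u v).neighborSet x = H.neighborSet x := by
  ext y
  simp only [SimpleGraph.mem_neighborSet]
  constructor
  · rintro ⟨hne, hA | ⟨rfl, rfl⟩ | ⟨rfl, rfl⟩⟩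
    · exact hA
    · exact absurd rfl hx
    · exact absurd rfl hx'
  · intro hA
    exact ⟨hA.ne, Or.inl hA⟩

lemma deg_addEdge_u (H : SimpleGraph V) {u v : V} (h : u ≠ v) (hA : ¬ H.Adj u v) :
    deg (addEdge H u v) u = deg H u + 1 := by
  rw [deg, ns_addEdge_u H h, Set.ncard_insert_of_notMem (by simpa using hA) (Set.toFinite _)]
  rfl

lemma deg_addEdge_v (H : SimpleGraph V) {u v : V} (h : u ≠ v) (hA : ¬ H.Adj u v) :
    deg (addEdge H u v) v = deg H v + 1 := by
  rw [addEdge_comm]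
  exact deg_addEdge_u H h.symm (fun hc => hA hc.symm)

lemma deg_addEdge_other (H : SimpleGraph V) {u v x : V} (hx : x ≠ u) (hx' : x ≠ v) :
    deg (addEdge H u v) x = deg H x := by
  rw [deg, ns_addEdge_other H hx hx']
  rfl

lemma deg_mono (H : SimpleGraph V) (u v x : V) : deg H x ≤ deg (addEdge H u v) x :=
  Set.ncard_le_ncard (fun _ hy => le_addEdge H u v hy) (Set.toFinite _)

lemma phi_step (H : SimpleGraph V) {Δ : ℕ} {u v : V} (h : u ≠ v) (hA : ¬ H.Adj u v)
    (hu : deg H u < Δ) : Phi Δ (addEdge H u v) + 1 ≤ Phi Δ H := by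
  have key : ∀ x, Δ - deg (addEdge H u v) x ≤ Δ - deg H x :=
    fun x => Nat.sub_le_sub_left (deg_mono H u v x) Δ
  rw [Phi, Phi, ← Finset.add_sum_erase _ _ (mem_univ u), ← Finset.add_sum_erase _ _ (mem_univ u)]
  have h1 : deg (addEdge H u v) u = deg H u + 1 := deg_addEdge_u H h hA
  have h2 : ∑ x ∈ univ.erase u, (Δ - deg (addEdge H u v) x) ≤
      ∑ x ∈ univ.erase u, (Δ - deg H x) := Finset.sum_le_sum fun x _ => key x
  omega

lemma big_addEdge_le (H : SimpleGraph V) {Δ : ℕ} {u v : V} (h : u ≠ v) (hA : ¬ H.Adj u v)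
    (hu : deg H u < Δ) : big Δ (addEdge H u v) ≤ big Δ H + 1 := by
  have hsub : {x | deg (addEdge H u v) x = Δ + 1} ⊆ insert v {x | deg H x = Δ + 1} := by
    intro x hx
    simp only [Set.mem_setOf_eq] at hx
    by_cases hxu : x = u
    · subst hxu
      rw [deg_addEdge_u H h hA] at hx
      omega
    · by_cases hxv : x = v
      · exact Or.inl hxv
      · rw [deg_addEdge_other H hxu hxv] at hx
        exact Or.inr hx
  calc big Δ (addEdge H u v) ≤ (insert v {x | deg H x = Δ + 1}).ncard :=
        Set.ncard_le_ncard hsub (Set.toFinite _)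
    _ ≤ big Δ H + 1 := Set.ncard_insert_le _ _

lemma big_addEdge_eq (H : SimpleGraph V) {Δ : ℕ} {u v : V} (h : u ≠ v) (hA : ¬ H.Adj u v)
    (hu : deg H u < Δ) (hv : deg H v < Δ) : big Δ (addEdge H u v) = big Δ H := by
  have hs : {x | deg (addEdge H u v) x = Δ + 1} = {x | deg H x = Δ + 1} := by
    ext x
    simp only [Set.mem_setOf_eq]
    by_cases hxu : x = u
    · subst hxu
      rw [deg_addEdge_u H h hA]
      omega
    · by_cases hxv : x = v
      · subst hxv
        rw [deg_addEdge_v H h hA]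
        omega
      · rw [deg_addEdge_other H hxu hxv]
  rw [big, hs, big]

lemma mem_B3_self (H : SimpleGraph V) (u : V) : u ∈ B3 H u := Or.inl rfl

lemma notin_B3 (H : SimpleGraph V) {u v : V} (hv : v ∉ B3 H u) :
    v ≠ u ∧ ¬ H.Adj u v ∧ (∀ a, ¬ (H.Adj u a ∧ H.Adj a v)) ∧
      ∀ a b, ¬ (H.Adj u a ∧ H.Adj a b ∧ H.Adj b v) := by
  simp only [B3, Set.mem_setOf_eq, not_or, not_exists] at hv
  refine ⟨hv.1, hv.2.1, fun a hc => (hv.2.2.1 a) hc, fun a b hc => ?_⟩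
  exact (hv.2.2.2 a b) hc

lemma codeg_comm (H : SimpleGraph V) (x y : V) : codeg H x y = codeg H y x := by
  rw [codeg, codeg, Set.inter_comm]

lemma ncard_le_singleton {s : Set V} {a : V} (h : s ⊆ {a}) : s.ncard ≤ 1 := by
  calc s.ncard ≤ ({a} : Set V).ncard := Set.ncard_le_ncard h (Set.toFinite _)
    _ = 1 := Set.ncard_singleton a

lemma codeg_addEdge_uv (H : SimpleGraph V) {C : ℕ}
    (hcod : ∀ x y, x ≠ y → codeg H x y ≤ C) {u v : V} (hv : v ∉ B3 H u) :
    codeg (addEdge H u v) u v ≤ C := by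
  obtain ⟨h1, h2, h3, h4⟩ := notin_B3 H hv
  have huv : u ≠ v := fun hc => h1 hc.symm
  rw [codeg, ns_addEdge_u H huv, ns_addEdge_v H huv]
  have hsub : insert v (H.neighborSet u) ∩ insert u (H.neighborSet v) ⊆
      H.neighborSet u ∩ H.neighborSet v := by
    rintro w ⟨hw1, hw2⟩
    rcases hw1 with rfl | hw1
    · rcases hw2 with rfl | hw2
      · exact absurd rfl huv
      · exact absurd hw2 (H.irrefl)
    · rcases hw2 with rfl | hw2
      · exact absurd hw1 (H.irrefl)
      · exact ⟨hw1, hw2⟩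
  exact le_trans (Set.ncard_le_ncard hsub (Set.toFinite _)) (hcod u v huv)

lemma codeg_addEdge_aux_u (H : SimpleGraph V) {C : ℕ} (hC : 1 ≤ C)
    (hcod : ∀ x y, x ≠ y → codeg H x y ≤ C) {u v : V} (hv : v ∉ B3 H u)
    {y : V} (hyu : y ≠ u) (hyv : y ≠ v) : codeg (addEdge H u v) u y ≤ C := by
  obtain ⟨h1, h2, h3, h4⟩ := notin_B3 H hv
  rw [codeg, ns_addEdge_u H (fun hc => h1 hc.symm), ns_addEdge_other H hyu hyv]
  by_cases hyA : H.Adj y v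
  · refine le_trans (ncard_le_singleton (a := v) ?_) hC
    rintro w ⟨hw1, hw2⟩
    rcases hw1 with rfl | hw1
    · rfl
    · exact absurd ⟨hw1, (H.mem_neighborSet y w).1 hw2 |>.symm, hyA⟩ (h4 w y)
  · have hsub : insert v (H.neighborSet u) ∩ H.neighborSet y ⊆
        H.neighborSet u ∩ H.neighborSet y := by
      rintro w ⟨hw1, hw2⟩
      rcases hw1 with rfl | hw1
      · exact absurd hw2 hyA
      · exact ⟨hw1, hw2⟩
    exact le_trans (Set.ncard_le_ncard hsub (Set.toFinite _)) (hcod u y (Ne.symm hyu))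

lemma codeg_addEdge_aux_v (H : SimpleGraph V) {C : ℕ} (hC : 1 ≤ C)
    (hcod : ∀ x y, x ≠ y → codeg H x y ≤ C) {u v : V} (hv : v ∉ B3 H u)
    {y : V} (hyu : y ≠ u) (hyv : y ≠ v) : codeg (addEdge H u v) v y ≤ C := by
  obtain ⟨h1, h2, h3, h4⟩ := notin_B3 H hv
  have huv : u ≠ v := fun hc => h1 hc.symm
  rw [codeg, ns_addEdge_v H huv, ns_addEdge_other H hyu hyv]
  by_cases hyA : H.Adj u y
  · refine le_trans (ncard_le_singleton (a := u) ?_) hC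
    rintro w ⟨hw1, hw2⟩
    rcases hw1 with rfl | hw1
    · rfl
    · exact absurd ⟨hyA, (H.mem_neighborSet y w).1 hw2,
        ((H.mem_neighborSet v w).1 hw1).symm⟩ (h4 y w)
  · have hsub : insert u (H.neighborSet v) ∩ H.neighborSet y ⊆
        H.neighborSet v ∩ H.neighborSet y := by
      rintro w ⟨hw1, hw2⟩
      rcases hw1 with rfl | hw1
      · exact absurd ((H.mem_neighborSet y w).1 hw2).symm hyA
      · exact ⟨hw1, hw2⟩
    exact le_trans (Set.ncard_le_ncard hsub (Set.toFinite _)) (hcod v y (Ne.symm hyv))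

lemma codeg_addEdge (H : SimpleGraph V) {C : ℕ} (hC : 1 ≤ C)
    (hcod : ∀ x y, x ≠ y → codeg H x y ≤ C) {u v : V} (hv : v ∉ B3 H u) :
    ∀ x y, x ≠ y → codeg (addEdge H u v) x y ≤ C := by
  intro x y hxy
  obtain ⟨h1, h2, h3, h4⟩ := notin_B3 H hv
  by_cases hxu : x = u
  · subst hxu
    by_cases hyv : y = v
    · subst hyv
      exact codeg_addEdge_uv H hcod hv
    · exact codeg_addEdge_aux_u H hC hcod hv (Ne.symm hxy) hyv
  · by_cases hxv : x = v
    · subst hxv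
      by_cases hyu : y = u
      · subst hyu
        rw [codeg_comm]
        exact codeg_addEdge_uv H hcod hv
      · exact codeg_addEdge_aux_v H hC hcod hv hyu (Ne.symm hxy)
    · by_cases hyu : y = u
      · subst hyu
        rw [codeg_comm]
        exact codeg_addEdge_aux_u H hC hcod hv hxu hxv
      · by_cases hyv : y = v
        · subst hyv
          rw [codeg_comm]
          exact codeg_addEdge_aux_v H hC hcod hv hxu hxv
        · rw [codeg, ns_addEdge_other H hxu hxv, ns_addEdge_other H hyu hyv]
          exact hcod x y hxy

lemma B3_card (H : SimpleGraph V) {Δ : ℕ} (hΔ : 2 ≤ Δ) {u : V}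
    (hdeg : ∀ x, deg H x ≤ Δ + 1) (hu : deg H u < Δ) : (B3 H u).ncard ≤ Δ ^ 3 := by
  classical
  set NF : V → Finset V := fun x => (H.neighborSet x).toFinset with hNF
  have hmem : ∀ x y, y ∈ NF x ↔ H.Adj x y := by
    intro x y
    simp [hNF]
  have hNFc : ∀ x, (NF x).card ≤ Δ + 1 := by
    intro x
    rw [hNF]
    rw [← Set.ncard_eq_toFinset_card']
    exact hdeg x
  have hNFu : (NF u).card ≤ Δ - 1 := by
    have : (NF u).card = deg H u := by
      rw [hNF, ← Set.ncard_eq_toFinset_card']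
      rfl
    omega
  set T : Finset V := insert u ((NF u).biUnion fun a =>
    insert a (((NF a).erase u).biUnion fun b => insert b ((NF b).erase a))) with hT
  have hsub : B3 H u ⊆ ↑T := by
    intro x hx
    rw [Finset.mem_coe, hT]
    rcases hx with rfl | hAdj | ⟨a, ha1, ha2⟩ | ⟨a, b, hp1, hp2, hp3⟩
    · exact Finset.mem_insert_self _ _
    · exact Finset.mem_insert_of_mem (Finset.mem_biUnion.2
        ⟨x, (hmem u x).2 hAdj, Finset.mem_insert_self _ _⟩)
    · by_cases hxu : x = u
      · exact hxu ▸ Finset.mem_insert_self _ _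
      · refine Finset.mem_insert_of_mem (Finset.mem_biUnion.2 ⟨a, (hmem u a).2 ha1,
          Finset.mem_insert_of_mem (Finset.mem_biUnion.2 ⟨x,
            Finset.mem_erase.2 ⟨hxu, (hmem a x).2 ha2⟩, Finset.mem_insert_self _ _⟩)⟩)
    · by_cases hxu : x = u
      · exact hxu ▸ Finset.mem_insert_self _ _
      · by_cases hxa : x = a
        · subst hxa
          exact Finset.mem_insert_of_mem (Finset.mem_biUnion.2
            ⟨x, (hmem u x).2 hp1, Finset.mem_insert_self _ _⟩)
        · by_cases hbu : b = u
          · exact Finset.mem_insert_of_mem (Finset.mem_biUnion.2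
              ⟨x, (hmem u x).2 (hbu ▸ hp3), Finset.mem_insert_self _ _⟩)
          · refine Finset.mem_insert_of_mem (Finset.mem_biUnion.2 ⟨a, (hmem u a).2 hp1,
              Finset.mem_insert_of_mem (Finset.mem_biUnion.2 ⟨b,
                Finset.mem_erase.2 ⟨hbu, (hmem a b).2 hp2⟩, ?_⟩)⟩)
            by_cases hxb : x = b
            · exact hxb ▸ Finset.mem_insert_self _ _
            · exact Finset.mem_insert_of_mem (Finset.mem_erase.2 ⟨hxa, (hmem b x).2 hp3⟩)
  have hinner2 : ∀ a ∈ NF u, ∀ b ∈ (NF a).erase u, (insert b ((NF b).erase a)).card ≤ 1 + Δ := by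
    intro a ha b hb
    have hab : a ∈ NF b := by
      rw [hmem]
      exact ((hmem a b).1 (Finset.mem_of_mem_erase hb)).symm
    have : ((NF b).erase a).card = (NF b).card - 1 := Finset.card_erase_of_mem hab
    have := hNFc b
    calc (insert b ((NF b).erase a)).card ≤ ((NF b).erase a).card + 1 :=
          Finset.card_insert_le _ _
      _ ≤ 1 + Δ := by omega
  have hinner1 : ∀ a ∈ NF u,
      (insert a (((NF a).erase u).biUnion fun b => insert b ((NF b).erase a))).card ≤
        1 + Δ * (1 + Δ) := by
    intro a ha
    have hua : u ∈ NF a := by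
      rw [hmem]
      exact ((hmem u a).1 ha).symm
    have hcarde : ((NF a).erase u).card ≤ Δ := by
      have : ((NF a).erase u).card = (NF a).card - 1 := Finset.card_erase_of_mem hua
      have := hNFc a
      omega
    calc (insert a (((NF a).erase u).biUnion fun b => insert b ((NF b).erase a))).card
        ≤ (((NF a).erase u).biUnion fun b => insert b ((NF b).erase a)).card + 1 :=
          Finset.card_insert_le _ _
      _ ≤ (∑ b ∈ (NF a).erase u, (insert b ((NF b).erase a)).card) + 1 := by
          exact Nat.add_le_add_right Finset.card_biUnion_le 1
      _ ≤ (∑ _b ∈ (NF a).erase u, (1 + Δ)) + 1 := by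
          refine Nat.add_le_add_right (Finset.sum_le_sum ?_) 1
          intro b hb
          exact hinner2 a ha b hb
      _ = ((NF a).erase u).card * (1 + Δ) + 1 := by
          rw [Finset.sum_const, smul_eq_mul]
      _ ≤ Δ * (1 + Δ) + 1 := by
          exact Nat.add_le_add_right (Nat.mul_le_mul_right _ hcarde) 1
      _ = 1 + Δ * (1 + Δ) := by omega
  have hTcard : T.card ≤ 1 + (Δ - 1) * (1 + Δ * (1 + Δ)) := by
    calc T.card ≤ ((NF u).biUnion fun a =>
          insert a (((NF a).erase u).biUnion fun b => insert b ((NF b).erase a))).card + 1 :=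
          Finset.card_insert_le _ _
      _ ≤ (∑ a ∈ NF u, (insert a (((NF a).erase u).biUnion fun b =>
            insert b ((NF b).erase a))).card) + 1 :=
          Nat.add_le_add_right Finset.card_biUnion_le 1
      _ ≤ (∑ _a ∈ NF u, (1 + Δ * (1 + Δ))) + 1 :=
          Nat.add_le_add_right (Finset.sum_le_sum fun a ha => hinner1 a ha) 1
      _ = (NF u).card * (1 + Δ * (1 + Δ)) + 1 := by rw [Finset.sum_const, smul_eq_mul]
      _ ≤ (Δ - 1) * (1 + Δ * (1 + Δ)) + 1 :=
          Nat.add_le_add_right (Nat.mul_le_mul_right _ hNFu) 1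
      _ = 1 + (Δ - 1) * (1 + Δ * (1 + Δ)) := by omega
  have harith : 1 + (Δ - 1) * (1 + Δ * (1 + Δ)) ≤ Δ ^ 3 := by
    obtain ⟨e, rfl⟩ : ∃ e, Δ = e + 1 := ⟨Δ - 1, by omega⟩
    simp only [Nat.add_sub_cancel]
    ring_nf
    nlinarith [sq_nonneg e]
  calc (B3 H u).ncard ≤ (↑T : Set V).ncard := Set.ncard_le_ncard hsub (Set.toFinite _)
    _ = T.card := Set.ncard_coe_finset T
    _ ≤ Δ ^ 3 := le_trans hTcard harith

lemma phi_le_of_clustered (H : SimpleGraph V) {Δ : ℕ} (hΔ : 2 ≤ Δ) {u : V}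
    (hdeg : ∀ x, deg H x ≤ Δ + 1) (hu : deg H u < Δ)
    (hcl : ∀ x, deg H x < Δ → x ∈ B3 H u) : Phi Δ H ≤ Δ ^ 4 := by
  classical
  have h1 : Phi Δ H = ∑ x ∈ univ.filter (fun x => deg H x < Δ), (Δ - deg H x) := by
    rw [Phi]
    refine (Finset.sum_subset (Finset.filter_subset _ _) ?_).symm
    intro x _ hx
    simp only [Finset.mem_filter, Finset.mem_univ, true_and, not_lt] at hx
    omega
  have h2 : ∑ x ∈ univ.filter (fun x => deg H x < Δ), (Δ - deg H x) ≤
      (univ.filter (fun x => deg H x < Δ)).card * Δ := by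
    calc _ ≤ ∑ _x ∈ univ.filter (fun x => deg H x < Δ), Δ :=
          Finset.sum_le_sum fun x _ => Nat.sub_le _ _
      _ = _ := by rw [Finset.sum_const, smul_eq_mul]
  have h3 : (univ.filter (fun x => deg H x < Δ)).card ≤ Δ ^ 3 := by
    have hsub : univ.filter (fun x => deg H x < Δ) ⊆ (B3 H u).toFinset := by
      intro x hx
      simp only [Finset.mem_filter, Finset.mem_univ, true_and] at hx
      rw [Set.mem_toFinset]
      exact hcl x hx
    calc (univ.filter (fun x => deg H x < Δ)).card ≤ (B3 H u).toFinset.card :=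
          Finset.card_le_card hsub
      _ = (B3 H u).ncard := (Set.ncard_eq_toFinset_card' _).symm
      _ ≤ Δ ^ 3 := B3_card H hΔ hdeg hu
  calc Phi Δ H ≤ (univ.filter (fun x => deg H x < Δ)).card * Δ := h1 ▸ h2
    _ ≤ Δ ^ 3 * Δ := Nat.mul_le_mul_right _ h3
    _ = Δ ^ 4 := by ring

lemma phi_pos (H : SimpleGraph V) {Δ : ℕ} {u : V} (hu : deg H u < Δ) : 1 ≤ Phi Δ H := by
  have h : Δ - deg H u ≤ Phi Δ H := by
    rw [Phi]
    exact Finset.single_le_sum (f := fun x => Δ - deg H x) (fun i _ => Nat.zero_le _) (mem_univ u)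
  omega

lemma exists_far (H : SimpleGraph V) {Δ : ℕ} (hΔ : 2 ≤ Δ)
    (hn : 2 * Δ ^ 4 ≤ Fintype.card V) (hdeg : ∀ x, deg H x ≤ Δ + 1) {u : V}
    (hu : deg H u < Δ) (hbig : big Δ H ≤ Δ ^ 4 - 1) :
    ∃ w, w ∉ B3 H u ∧ deg H w ≤ Δ := by
  by_contra hcon
  push_neg at hcon
  have hsub : (Set.univ : Set V) ⊆ B3 H u ∪ {x | deg H x = Δ + 1} := by
    intro w _
    by_cases hw : w ∈ B3 H u
    · exact Or.inl hw
    · have := hcon w hw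
      have := hdeg w
      exact Or.inr (by simp only [Set.mem_setOf_eq]; omega)
  have hcard : Fintype.card V ≤ Δ ^ 3 + (Δ ^ 4 - 1) := by
    calc Fintype.card V = (Set.univ : Set V).ncard := by
          rw [Set.ncard_univ, Nat.card_eq_fintype_card]
      _ ≤ (B3 H u ∪ {x | deg H x = Δ + 1}).ncard :=
          Set.ncard_le_ncard hsub (Set.toFinite _)
      _ ≤ (B3 H u).ncard + big Δ H := Set.ncard_union_le _ _
      _ ≤ Δ ^ 3 + (Δ ^ 4 - 1) := Nat.add_le_add (B3_card H hΔ hdeg hu) hbig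
  have h34 : Δ ^ 3 ≤ Δ ^ 4 := Nat.pow_le_pow_right (by omega) (by omega)
  have h4pos : 1 ≤ Δ ^ 4 := Nat.one_le_pow _ _ (by omega)
  omega

lemma finish_of_phi_zero (H : SimpleGraph V) {Δ C : ℕ} (h0 : Phi Δ H = 0)
    (hdeg : ∀ x, deg H x ≤ Δ + 1) (hcod : ∀ x y, x ≠ y → codeg H x y ≤ C) :
    ∃ K : SimpleGraph V, H ≤ K ∧ (∀ x, deg K x = Δ ∨ deg K x = Δ + 1) ∧
      ∀ x y, x ≠ y → codeg K x y ≤ C := by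
  refine ⟨H, le_refl _, fun x => ?_, hcod⟩
  have : Δ - deg H x = 0 := by
    rw [Phi] at h0
    exact (Finset.sum_eq_zero_iff.1 h0) x (mem_univ x)
  have := hdeg x
  omega

lemma main_ind {Δ C : ℕ} (hΔ : 2 ≤ Δ) (hC : 1 ≤ C) (hn : 2 * Δ ^ 4 ≤ Fintype.card V) :
    ∀ (k : ℕ) (H : SimpleGraph V), Phi Δ H ≤ k → (∀ x, deg H x ≤ Δ + 1) →
      (∀ x y, x ≠ y → codeg H x y ≤ C) →
      (big Δ H = 0 ∨ big Δ H + Phi Δ H ≤ Δ ^ 4) →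
      ∃ K : SimpleGraph V, H ≤ K ∧ (∀ x, deg K x = Δ ∨ deg K x = Δ + 1) ∧
        ∀ x y, x ≠ y → codeg K x y ≤ C := by
  intro k
  induction k with
  | zero =>
    intro H hk hdeg hcod _
    exact finish_of_phi_zero H (by omega) hdeg hcod
  | succ k ih =>
    intro H hk hdeg hcod hinv
    by_cases h0 : Phi Δ H = 0
    · exact finish_of_phi_zero H h0 hdeg hcod
    · -- find a deficient vertex u
      have : ∃ u, deg H u < Δ := by
        by_contra hcon
        push_neg at hcon
        refine h0 (Finset.sum_eq_zero fun x _ => ?_)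
        have := hcon x
        omega
      obtain ⟨u, hu⟩ := this
      -- pick a partner v
      have hpick : ∃ v, v ∉ B3 H u ∧ deg H v ≤ Δ ∧
          (big Δ (addEdge H u v) = 0 ∨
            big Δ (addEdge H u v) + Phi Δ (addEdge H u v) ≤ Δ ^ 4) := by
        by_cases hfar : ∃ v, v ∉ B3 H u ∧ deg H v < Δ
        · obtain ⟨v, hv1, hv2⟩ := hfar
          obtain ⟨hne', hA', _, _⟩ := notin_B3 H hv1
          have hne : u ≠ v := fun hc => hne' hc.symm
          refine ⟨v, hv1, le_of_lt hv2, ?_⟩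
          rw [big_addEdge_eq H hne hA' hu hv2]
          have hphi := phi_step H hne hA' hu
          rcases hinv with h | h
          · exact Or.inl h
          · exact Or.inr (by omega)
        · push_neg at hfar
          have hcl : ∀ x, deg H x < Δ → x ∈ B3 H u := by
            intro x hx
            by_contra hc
            exact absurd hx (not_lt.2 (le_of_lt (lt_of_not_ge (fun hle =>
              (not_lt.2 (hfar x hc)) hx))))
          have hphile : Phi Δ H ≤ Δ ^ 4 := phi_le_of_clustered H hΔ hdeg hu hcl
          have hbig : big Δ H ≤ Δ ^ 4 - 1 := by
            have hpos := phi_pos H hu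
            rcases hinv with h | h
            · omega
            · omega
          obtain ⟨v, hv1, hv2⟩ := exists_far H hΔ hn hdeg hu hbig
          obtain ⟨hne', hA', _, _⟩ := notin_B3 H hv1
          have hne : u ≠ v := fun hc => hne' hc.symm
          have hble := big_addEdge_le H hne hA' hu
          have hphi := phi_step H hne hA' hu
          refine ⟨v, hv1, hv2, Or.inr ?_⟩
          have : big Δ H + Phi Δ H ≤ Δ ^ 4 := by
            rcases hinv with h | h
            · omega
            · exact h
          omega
      obtain ⟨v, hv1, hv2, hinv'⟩ := hpick
      obtain ⟨hne', hA', _, _⟩ := notin_B3 H hv1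
      have hne : u ≠ v := fun hc => hne' hc.symm
      have hphi := phi_step H hne hA' hu
      have hdeg' : ∀ x, deg (addEdge H u v) x ≤ Δ + 1 := by
        intro x
        by_cases hxu : x = u
        · subst hxu
          rw [deg_addEdge_u H hne hA']
          omega
        · by_cases hxv : x = v
          · subst hxv
            rw [deg_addEdge_v H hne hA']
            omega
          · rw [deg_addEdge_other H hxu hxv]
            exact hdeg x
      have hcod' := codeg_addEdge H hC hcod hv1
      obtain ⟨K, hK1, hK2, hK3⟩ := ih (addEdge H u v) (by omega) hdeg' hcod' hinv'
      exact ⟨K, le_trans (le_addEdge H u v) hK1, hK2, hK3⟩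

end RegAux

theorem regularization_step {V : Type} [Fintype V] (Δ : ℕ) (hΔ : 2 ≤ Δ)
    (hn : 2 * Δ^4 ≤ Fintype.card V)
    (G : SimpleGraph V) [DecidableRel G.Adj] (hdeg : G.maxDegree ≤ Δ)
    (Δ₂ : ℕ) (hΔ₂ : ∀ u v : V, u ≠ v → Nat.card {w : V | G.Adj u w ∧ G.Adj v w} ≤ Δ₂) :
    ∃ H : SimpleGraph V, G ≤ H ∧
      (∀ v : V, Nat.card {u : V | H.Adj v u} = Δ ∨ Nat.card {u : V | H.Adj v u} = Δ + 1) ∧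
      ∀ u v : V, u ≠ v → Nat.card {w : V | H.Adj u w ∧ H.Adj v w} ≤ max Δ₂ 1 := by
  classical
  have hdegG : ∀ v, RegAux.deg G v ≤ Δ := by
    intro v
    have h1 : RegAux.deg G v = G.degree v := by
      rw [RegAux.deg, SimpleGraph.degree, Set.ncard_eq_toFinset_card']
      congr 1
    rw [h1]
    exact le_trans (G.degree_le_maxDegree v) hdeg
  have hcodG : ∀ x y : V, x ≠ y → RegAux.codeg G x y ≤ max Δ₂ 1 := by
    intro x y hxy
    have h1 : RegAux.codeg G x y = Nat.card {w : V | G.Adj x w ∧ G.Adj y w} := by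
      rw [RegAux.codeg, ← Nat.card_coe_set_eq]
      congr 1
    rw [h1]
    exact le_trans (hΔ₂ x y hxy) (le_max_left _ _)
  have hbigG : RegAux.big Δ G = 0 := by
    rw [RegAux.big]
    convert Set.ncard_empty V
    ext x
    simp only [Set.mem_setOf_eq, Set.mem_empty_iff_false, iff_false]
    have := hdegG x
    omega
  obtain ⟨K, hK1, hK2, hK3⟩ := RegAux.main_ind (V := V) hΔ (le_max_right Δ₂ 1) hn
    (RegAux.Phi Δ G) G le_rfl (fun x => le_trans (hdegG x) (by omega)) hcodG (Or.inl hbigG)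
  refine ⟨K, hK1, fun v => ?_, fun u v huv => ?_⟩
  · have h1 : Nat.card {u : V | K.Adj v u} = RegAux.deg K v := by
      rw [RegAux.deg, ← Nat.card_coe_set_eq]
      rfl
    rw [h1]
    exact hK2 v
  · have h1 : Nat.card {w : V | K.Adj u w ∧ K.Adj v w} = RegAux.codeg K u v := by
      rw [RegAux.codeg, ← Nat.card_coe_set_eq]
      congr 1
    rw [h1]
    exact hK3 u v huv
end
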